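/- arXiv:1908.05766 — 5 statements merged into one kernel-verified Lean document; each statement's English description precedes it below -/
import Mathlib

section
/- Let T>0 and let u : ℝ → ℝ³ → ℝ³ be continuous, C² in the space variable, with u, ∂ₓu and ∂ₓ²u continuous and bounded on [0,T]×ℝ³. Then for every x₀ ∈ ℝ³, every ξ₀ ∈ ℝ³ with ξ₀ ≠ 0, and every b₀ ∈ ℝ³, there exists a unique triple of differentiable curves γ,ξ,b : [0,T] → ℝ³ with γ(0)=x₀, ξ(0)=ξ₀, b(0)=b₀, such that ξ(t) ≠ 0 for all t ∈ [0,T] and (γ,ξ,b) satisfies the bicharacteristic-amplitude system along u on [0,T]. -/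
noncomputable section

open MeasureTheory Set
open scoped RealInnerProductSpace ENNReal

abbrev E3 := EuclideanSpace ℝ (Fin 3)

/-- The `i`-th standard basis vector of `ℝ³`. -/
def e3 (i : Fin 3) : E3 := EuclideanSpace.single i 1

/-- The spatial partial derivative `∂ⱼ fᵢ (x)`. -/
def pd3 (f : E3 → E3) (j i : Fin 3) (x : E3) : ℝ := fderiv ℝ f x (e3 j) i

/-- The curl of a vector field on `ℝ³`. -/
def curl3 (f : E3 → E3) (x : E3) : E3 :=
  (WithLp.equiv 2 (Fin 3 → ℝ)).symm
    ![pd3 f 1 2 x - pd3 f 2 1 x, pd3 f 2 0 x - pd3 f 0 2 x, pd3 f 0 1 x - pd3 f 1 0 x]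

/-- The divergence of a vector field on `ℝ³`. -/
def div3 (f : E3 → E3) (x : E3) : ℝ := ∑ i, pd3 f i i x

/-- The transpose of the spatial Jacobian of `f` at `x`, applied to `ξ`:
`(∂ₓf(x))ᵀ ξ`, where `(∂ₓf)_{ij} = ∂ⱼfᵢ`. -/
def jacT (f : E3 → E3) (x ξ : E3) : E3 :=
  (WithLp.equiv 2 (Fin 3 → ℝ)).symm (fun i => ⟪ξ, fderiv ℝ f x (e3 i)⟫)

/-- The cross product on `ℝ³`. -/
def cross3 (a b : E3) : E3 :=
  (WithLp.equiv 2 (Fin 3 → ℝ)).symm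
    ![a 1 * b 2 - a 2 * b 1, a 2 * b 0 - a 0 * b 2, a 0 * b 1 - a 1 * b 0]

/-- `(u, P)` is a solution of the incompressible Euler equation on `[0,T] × ℝ³`:
`u` is C¹ in time and C² in space, `u` and its first and second spatial derivatives are
continuous and bounded on `[0,T] × ℝ³`, and `∂ₜu + (u·∇)u + ∇P = 0`, `div u = 0` hold
pointwise on `[0,T] × ℝ³`. -/
structure IsEulerSolutionOn (u : ℝ → E3 → E3) (P : ℝ → E3 → ℝ) (T : ℝ) : Prop where
  u_time_C1 : ∀ x, ContDiff ℝ 1 fun t => u t x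
  u_space_C2 : ∀ t, ContDiff ℝ 2 (u t)
  cont_u : Continuous fun q : ℝ × E3 => u q.1 q.2
  cont_du : Continuous fun q : ℝ × E3 => fderiv ℝ (u q.1) q.2
  cont_d2u : Continuous fun q : ℝ × E3 => fderiv ℝ (fderiv ℝ (u q.1)) q.2
  bdd : ∃ C : ℝ, ∀ t ∈ Icc 0 T, ∀ x : E3, ‖u t x‖ ≤ C ∧ ‖fderiv ℝ (u t) x‖ ≤ C ∧
      ‖fderiv ℝ (fderiv ℝ (u t)) x‖ ≤ C
  P_space_C1 : ∀ t, ContDiff ℝ 1 (P t)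
  momentum : ∀ t ∈ Icc 0 T, ∀ x : E3,
      deriv (fun s => u s x) t + fderiv ℝ (u t) x (u t x) + gradient (P t) x = 0
  incompressible : ∀ t ∈ Icc 0 T, ∀ x : E3, div3 (u t) x = 0

/-- `(v, P')` is a solution of the linearization of the Euler equation about `u`
on `[0,T] × ℝ³`: `v` is C¹, `P'` is C¹ in space, and
`∂ₜv + (u·∇)v + (v·∇)u + ∇P' = 0`, `div v = 0` hold pointwise on `[0,T] × ℝ³`. -/
structure IsLinEulerSolutionOn (u v : ℝ → E3 → E3) (P' : ℝ → E3 → ℝ) (T : ℝ) : Prop where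
  v_C1 : ContDiff ℝ 1 fun q : ℝ × E3 => v q.1 q.2
  P'_space_C1 : ∀ t, ContDiff ℝ 1 (P' t)
  momentum : ∀ t ∈ Icc 0 T, ∀ x : E3,
      deriv (fun s => v s x) t + fderiv ℝ (v t) x (u t x) + fderiv ℝ (u t) x (v t x)
        + gradient (P' t) x = 0
  incompressible : ∀ t ∈ Icc 0 T, ∀ x : E3, div3 (v t) x = 0

/-- `(γ, ξ, b)` is a solution of the bicharacteristic-amplitude system along `u` on `[0,T]`:
`ξ(t) ≠ 0`, `γ' = u(t,γ)`, `ξ' = −(∂ₓu)ᵀξ`, and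
`b' = −(∂ₓu)b + 2 (⟨ξ, (∂ₓu)b⟩/|ξ|²) ξ` along `γ`. -/
structure IsBicharSolution (u : ℝ → E3 → E3) (T : ℝ) (γ ξ b : ℝ → E3) : Prop where
  xi_ne : ∀ t ∈ Icc 0 T, ξ t ≠ 0
  hgamma : ∀ t ∈ Icc 0 T, HasDerivAt γ (u t (γ t)) t
  hxi : ∀ t ∈ Icc 0 T, HasDerivAt ξ (-jacT (u t) (γ t) (ξ t)) t
  hb : ∀ t ∈ Icc 0 T, HasDerivAt b
      (-(fderiv ℝ (u t) (γ t) (b t)) +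
        (2 * ⟪ξ t, fderiv ℝ (u t) (γ t) (b t)⟫ / ‖ξ t‖ ^ 2) • ξ t) t

section Helpers
open scoped NNReal

/-- Radial retraction onto the closed ball of radius `M`. -/
def ret (M : ℝ) (x : E3) : E3 := (M / max M ‖x‖) • x

lemma ret_eq_self {M : ℝ} (hM : 0 < M) {x : E3} (h : ‖x‖ ≤ M) : ret M x = x := by
  rw [ret, max_eq_left h, div_self hM.ne', one_smul]

lemma norm_ret_le_norm {M : ℝ} (hM : 0 < M) (x : E3) : ‖ret M x‖ ≤ ‖x‖ := by
  rw [ret, norm_smul, Real.norm_eq_abs, abs_of_nonneg (by positivity)]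
  have h1 : M / max M ‖x‖ ≤ 1 := by
    rw [div_le_one (lt_of_lt_of_le hM (le_max_left _ _))]
    exact le_max_left _ _
  nlinarith [norm_nonneg x]

lemma norm_ret_le {M : ℝ} (hM : 0 < M) (x : E3) : ‖ret M x‖ ≤ M := by
  rw [ret, norm_smul, Real.norm_eq_abs, abs_of_nonneg (by positivity)]
  have hmax : 0 < max M ‖x‖ := lt_of_lt_of_le hM (le_max_left _ _)
  rw [div_mul_eq_mul_div, div_le_iff₀ hmax]
  nlinarith [le_max_right M ‖x‖]

lemma ret_lip_aux {M : ℝ} (hM : 0 < M) {x y : E3} (hxy : ‖x‖ ≤ ‖y‖) :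
    ‖ret M x - ret M y‖ ≤ 2 * ‖x - y‖ := by
  by_cases hy : ‖y‖ ≤ M
  · rw [ret_eq_self hM (hxy.trans hy), ret_eq_self hM hy]
    linarith [norm_nonneg (x - y)]
  · push_neg at hy
    have hy0 : (0:ℝ) < ‖y‖ := hM.trans hy
    have hry : ret M y = (M / ‖y‖) • y := by rw [ret, max_eq_right hy.le]
    have key : ret M x - ret M y
        = (ret M x - (M / ‖y‖) • x) + (M / ‖y‖) • (x - y) := by
      rw [hry, smul_sub]; abel
    have h2 : ‖(M / ‖y‖) • (x - y)‖ ≤ ‖x - y‖ := by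
      rw [norm_smul, Real.norm_eq_abs, abs_of_nonneg (by positivity)]
      have : M / ‖y‖ ≤ 1 := by rw [div_le_one hy0]; exact hy.le
      nlinarith [norm_nonneg (x - y)]
    have h1 : ‖ret M x - (M / ‖y‖) • x‖ ≤ ‖y‖ - ‖x‖ := by
      rw [ret, ← sub_smul, norm_smul, Real.norm_eq_abs]
      have hmax : 0 < max M ‖x‖ := lt_of_lt_of_le hM (le_max_left _ _)
      have hle : max M ‖x‖ ≤ ‖y‖ := max_le hy.le hxy
      have hc : 0 ≤ M / max M ‖x‖ - M / ‖y‖ := by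
        rw [sub_nonneg]
        exact div_le_div_of_nonneg_left hM.le hmax hle
      rw [abs_of_nonneg hc]
      rcases le_total ‖x‖ M with hx | hx
      · rw [max_eq_left hx, div_self hM.ne']
        have hxn := norm_nonneg x
        have e : (1 - M / ‖y‖) * ‖x‖ = (‖x‖ * ‖y‖ - M * ‖x‖) / ‖y‖ := by
          field_simp
        rw [e, div_le_iff₀ hy0]
        nlinarith [sq_nonneg (‖y‖ - ‖x‖), mul_le_mul_of_nonneg_right hx hxn]
      · rw [max_eq_right hx]
        have hx0 : (0:ℝ) < ‖x‖ := hM.trans_le hx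
        rw [sub_mul, div_mul_cancel₀ _ hx0.ne', div_mul_eq_mul_div, div_eq_mul_inv]
        have hyi : ‖y‖ * ‖y‖⁻¹ = 1 := mul_inv_cancel₀ hy0.ne'
        nlinarith [mul_nonneg (sub_nonneg.2 hxy) (sub_nonneg.2 hy.le), inv_pos.2 hy0]
    calc ‖ret M x - ret M y‖ ≤ ‖ret M x - (M / ‖y‖) • x‖ + ‖(M / ‖y‖) • (x - y)‖ := by
          rw [key]; exact norm_add_le _ _
      _ ≤ (‖y‖ - ‖x‖) + ‖x - y‖ := add_le_add h1 h2
      _ ≤ ‖x - y‖ + ‖x - y‖ := by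
          have := norm_sub_norm_le y x
          rw [norm_sub_rev y x] at this
          linarith
      _ = 2 * ‖x - y‖ := by ring

lemma ret_lip {M : ℝ} (hM : 0 < M) (x y : E3) : ‖ret M x - ret M y‖ ≤ 2 * ‖x - y‖ := by
  rcases le_total ‖x‖ ‖y‖ with h | h
  · exact ret_lip_aux hM h
  · rw [norm_sub_rev, norm_sub_rev x y]; exact ret_lip_aux hM h


/-- Picard–Lindelöf existence for a bounded field on a compact interval containing 0. -/
lemma exists_sol_bdd (F : ℝ → E3 → E3) {a b : ℝ} (ha : a ≤ 0) (hb : 0 ≤ b) (C : ℝ) (K : ℝ≥0)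
    (hC : ∀ t ∈ Icc a b, ∀ x : E3, ‖F t x‖ ≤ C)
    (hlip : ∀ t ∈ Icc a b, LipschitzWith K (F t))
    (hcont : ∀ x : E3, ContinuousOn (fun t => F t x) (Icc a b))
    (x₀ : E3) :
    ∃ f : ℝ → E3, f 0 = x₀ ∧ ∀ t ∈ Icc a b, HasDerivWithinAt f (F t (f t)) (Icc a b) t := by
  have hC0 : 0 ≤ C := (norm_nonneg _).trans (hC 0 ⟨ha, hb⟩ x₀)
  have hpl : IsPicardLindelof F (tmin := a) (tmax := b) ⟨0, ha, hb⟩ x₀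
      ⟨C * (b - a), by nlinarith⟩ 0 ⟨C, hC0⟩ K :=
    { lipschitzOnWith := fun t ht => LipschitzWith.lipschitzOnWith (hlip t ht)
      continuousOn := fun x _ => hcont x
      norm_le := fun t ht x _ => hC t ht x
      mul_max_le := by
        have : max (b - 0) (0 - a) ≤ b - a := by
          apply max_le <;> linarith
        simp only [NNReal.coe_mk, NNReal.coe_zero, sub_zero] at this ⊢
        exact mul_le_mul_of_nonneg_left this hC0 }
  obtain ⟨f, hf0, hf⟩ := hpl.exists_eq_forall_mem_Icc_hasDerivWithinAt₀
  exact ⟨f, hf0, hf⟩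

/-- Global existence on a compact interval for a field that is `K`-Lipschitz and vanishes at 0
(e.g. linear in the space variable), via truncation. -/
lemma exists_sol_lin (F : ℝ → E3 → E3) {a b : ℝ} (ha : a < 0) (hb : 0 < b) (K : ℝ≥0)
    (hlip : ∀ t ∈ Icc a b, LipschitzWith K (F t))
    (h0 : ∀ t ∈ Icc a b, F t 0 = 0)
    (hcont : ∀ x : E3, ContinuousOn (fun t => F t x) (Icc a b))
    (x₀ : E3) :
    ∃ f : ℝ → E3, f 0 = x₀ ∧ ∀ t ∈ Ioo a b, HasDerivAt f (F t (f t)) t := by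
  have hFle : ∀ t ∈ Icc a b, ∀ x : E3, ‖F t x‖ ≤ K * ‖x‖ := by
    intro t ht x
    have := (hlip t ht).dist_le_mul x 0
    simpa [dist_eq_norm, h0 t ht] using this
  set M : ℝ := ‖x₀‖ * Real.exp (K * (b - a)) + 1 with hMdef
  have hM : 0 < M := by positivity
  set G : ℝ → E3 → E3 := fun t x => F t (ret M x) with hGdef
  have hGbd : ∀ t ∈ Icc a b, ∀ x : E3, ‖G t x‖ ≤ K * M := by
    intro t ht x
    exact (hFle t ht _).trans (mul_le_mul_of_nonneg_left (norm_ret_le hM x) K.2)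
  have hGlip : ∀ t ∈ Icc a b, LipschitzWith (2 * K) (G t) := by
    intro t ht
    apply LipschitzWith.of_dist_le_mul
    intro x y
    rw [dist_eq_norm, dist_eq_norm]
    calc ‖G t x - G t y‖ ≤ K * ‖ret M x - ret M y‖ := by
          have := (hlip t ht).dist_le_mul (ret M x) (ret M y)
          simpa [dist_eq_norm] using this
      _ ≤ K * (2 * ‖x - y‖) := mul_le_mul_of_nonneg_left (ret_lip hM x y) K.2
      _ = (2 * K : ℝ≥0) * ‖x - y‖ := by push_cast; ring
  obtain ⟨f, hf0, hf⟩ := exists_sol_bdd G ha.le hb.le (K * M) (2 * K) hGbd hGlip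
    (fun x => hcont (ret M x)) x₀
  have hf' : ∀ t ∈ Ioo a b, HasDerivAt f (G t (f t)) t := fun t ht =>
    (hf t (Ioo_subset_Icc_self ht)).hasDerivAt (Icc_mem_nhds ht.1 ht.2)
  have fcont : ContinuousOn f (Icc a b) := fun t ht => (hf t ht).continuousWithinAt
  -- a priori bound
  have hbd : ∀ t ∈ Icc a b, ‖f t‖ ≤ ‖x₀‖ * Real.exp (K * (b - a)) := by
    have hbound : ∀ t ∈ Icc a b, ‖G t (f t)‖ ≤ (K:ℝ) * ‖f t‖ + 0 := by
      intro t ht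
      rw [add_zero]
      exact (hFle t ht _).trans
        (mul_le_mul_of_nonneg_left (norm_ret_le_norm hM _) K.2)
    intro t ht
    rcases le_or_gt 0 t with h0t | h0t
    · -- forward Gronwall on [0, t] ⊆ [0, b]
      have := norm_le_gronwallBound_of_norm_deriv_right_le
        (f := f) (f' := fun s => G s (f s)) (δ := ‖x₀‖) (K := K) (ε := 0) (a := 0) (b := b)
        (fcont.mono (Icc_subset_Icc ha.le le_rfl))
        (fun s hs => (hf' s ⟨ha.trans_le hs.1, hs.2⟩).hasDerivWithinAt)
        (by rw [hf0])
        (fun s hs => hbound s ⟨ha.le.trans hs.1, hs.2.le⟩)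
        t ⟨h0t, ht.2⟩
      rw [gronwallBound_ε0] at this
      refine this.trans ?_
      apply mul_le_mul_of_nonneg_left _ (norm_nonneg _)
      apply Real.exp_le_exp.2
      apply mul_le_mul_of_nonneg_left _ K.2
      cases ht; linarith
    · -- backward: consider g s = f (-s) on [0, -t]
      set g : ℝ → E3 := fun s => f (-s) with hgdef
      have hgd : ∀ s ∈ Ico 0 (-t), HasDerivWithinAt g (-(G (-s) (g s))) (Ici s) s := by
        intro s hs
        have hmem : -s ∈ Ioo a b := by
          constructor
          · cases hs; cases ht; simp at *; linarith
          · cases hs; linarith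
        have := (hf' (-s) hmem).scomp s (hasDerivAt_neg s)
        have h2 := this.hasDerivWithinAt (s := Ici s)
        simp only [neg_one_smul] at h2
        exact h2
      have := norm_le_gronwallBound_of_norm_deriv_right_le
        (f := g) (f' := fun s => -(G (-s) (g s))) (δ := ‖x₀‖) (K := K) (ε := 0)
        (a := 0) (b := -t)
        (by
          apply fcont.comp continuousOn_neg
          intro s hs
          constructor
          · cases hs; cases ht; simp at *; linarith
          · cases hs; cases ht; simp at *; linarith)
        hgd
        (by simp [hgdef, hf0])
        (by
          intro s hs
          rw [norm_neg]
          apply hbound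
          constructor
          · cases hs; cases ht; simp at *; linarith
          · cases hs; cases ht; simp at *; linarith)
        (-t) ⟨by linarith, le_rfl⟩
      rw [gronwallBound_ε0] at this
      have hgt : g (-t) = f t := by simp [hgdef]
      rw [hgt] at this
      refine this.trans ?_
      apply mul_le_mul_of_nonneg_left _ (norm_nonneg _)
      apply Real.exp_le_exp.2
      apply mul_le_mul_of_nonneg_left _ K.2
      cases ht; linarith
  refine ⟨f, hf0, fun t ht => ?_⟩
  have hlt : ‖f t‖ ≤ M := by
    have := hbd t (Ioo_subset_Icc_self ht); rw [hMdef]; linarith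
  have : G t (f t) = F t (f t) := by rw [hGdef]; simp [ret_eq_self hM hlt]
  rw [← this]
  exact hf' t ht

lemma e3_norm (i : Fin 3) : ‖e3 i‖ = 1 := by simp [e3, EuclideanSpace.norm_single]

lemma euclid_norm_le {v : E3} {M : ℝ} (h : ∀ i, |v i| ≤ M) : ‖v‖ ≤ 3 * M := by
  have hM : 0 ≤ M := (abs_nonneg _).trans (h 0)
  rw [EuclideanSpace.norm_eq]
  have hsum : ∑ i, ‖v i‖ ^ 2 ≤ (3 * M) ^ 2 := by
    rw [Fin.sum_univ_three]
    have h0 := h 0; have h1 := h 1; have h2 := h 2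
    simp only [Real.norm_eq_abs]
    nlinarith [abs_nonneg (v 0), abs_nonneg (v 1), abs_nonneg (v 2)]
  calc Real.sqrt (∑ i, ‖v i‖ ^ 2) ≤ Real.sqrt ((3 * M) ^ 2) := Real.sqrt_le_sqrt hsum
    _ = 3 * M := Real.sqrt_sq (by positivity)

lemma jacT_apply (f : E3 → E3) (x ξ : E3) (i : Fin 3) :
    jacT f x ξ i = ⟪ξ, fderiv ℝ f x (e3 i)⟫ := rfl

lemma jacT_sub (f : E3 → E3) (x ξ η : E3) :
    jacT f x ξ - jacT f x η = jacT f x (ξ - η) := by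
  ext i
  simp [jacT_apply, inner_sub_left]

lemma jacT_zero (f : E3 → E3) (x : E3) : jacT f x 0 = 0 := by
  ext i
  simp [jacT_apply]

lemma jacT_norm_le {f : E3 → E3} {x : E3} {C : ℝ} (ξ : E3) (hC : ‖fderiv ℝ f x‖ ≤ C) :
    ‖jacT f x ξ‖ ≤ 3 * (C * ‖ξ‖) := by
  apply euclid_norm_le
  intro i
  rw [jacT_apply]
  calc |⟪ξ, fderiv ℝ f x (e3 i)⟫| ≤ ‖ξ‖ * ‖fderiv ℝ f x (e3 i)‖ := abs_real_inner_le_norm _ _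
    _ ≤ ‖ξ‖ * (‖fderiv ℝ f x‖ * ‖e3 i‖) :=
        mul_le_mul_of_nonneg_left ((fderiv ℝ f x).le_opNorm _) (norm_nonneg _)
    _ = ‖fderiv ℝ f x‖ * ‖ξ‖ := by rw [e3_norm]; ring
    _ ≤ C * ‖ξ‖ := mul_le_mul_of_nonneg_right hC (norm_nonneg _)

lemma contOn_jacT {S : Set ℝ} {f : ℝ → E3 → E3} {p : ℝ → E3}
    (hD : ContinuousOn (fun t => fderiv ℝ (f t) (p t)) S) (x : E3) :
    ContinuousOn (fun t => jacT (f t) (p t) x) S := by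
  simp only [jacT]
  apply (PiLp.continuous_toLp 2 (fun _ : Fin 3 => ℝ)).comp_continuousOn
  apply continuousOn_pi.2
  intro i
  exact continuousOn_const.inner (hD.clm_apply continuousOn_const)

lemma F3_sub (D : E3 →L[ℝ] E3) (ξv w w' : E3) :
    (-(D w) + (2 * ⟪ξv, D w⟫ / ‖ξv‖ ^ 2) • ξv) - (-(D w') + (2 * ⟪ξv, D w'⟫ / ‖ξv‖ ^ 2) • ξv)
      = -(D (w - w')) + (2 * ⟪ξv, D (w - w')⟫ / ‖ξv‖ ^ 2) • ξv := by
  simp only [map_sub, inner_sub_right, mul_sub, sub_div, sub_smul, neg_sub]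
  abel

lemma F3_bound {D : E3 →L[ℝ] E3} {C : ℝ} (hD : ‖D‖ ≤ C) (ξv δ : E3) :
    ‖-(D δ) + (2 * ⟪ξv, D δ⟫ / ‖ξv‖ ^ 2) • ξv‖ ≤ 3 * C * ‖δ‖ := by
  have hC0 : 0 ≤ C := le_trans (norm_nonneg D) hD
  have hDδ : ‖D δ‖ ≤ C * ‖δ‖ :=
    le_trans (D.le_opNorm δ) (mul_le_mul_of_nonneg_right hD (norm_nonneg _))
  by_cases hξ : ξv = 0
  · rw [hξ]
    simp only [smul_zero, add_zero, norm_neg]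
    nlinarith [norm_nonneg δ, norm_nonneg (D δ)]
  · have hξ0 : (0:ℝ) < ‖ξv‖ := norm_pos_iff.2 hξ
    have h2 : ‖(2 * ⟪ξv, D δ⟫ / ‖ξv‖ ^ 2) • ξv‖ ≤ 2 * ‖D δ‖ := by
      rw [norm_smul, Real.norm_eq_abs, abs_div, abs_of_nonneg (by positivity : (0:ℝ) ≤ ‖ξv‖ ^ 2)]
      have hnum : |2 * ⟪ξv, D δ⟫| ≤ 2 * (‖ξv‖ * ‖D δ‖) := by
        rw [abs_mul, abs_two]
        exact mul_le_mul_of_nonneg_left (abs_real_inner_le_norm _ _) (by norm_num)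
      rw [div_mul_eq_mul_div, div_le_iff₀ (by positivity)]
      nlinarith [abs_nonneg (2 * ⟪ξv, D δ⟫), norm_nonneg (D δ)]
    calc ‖-(D δ) + (2 * ⟪ξv, D δ⟫ / ‖ξv‖ ^ 2) • ξv‖
        ≤ ‖-(D δ)‖ + ‖(2 * ⟪ξv, D δ⟫ / ‖ξv‖ ^ 2) • ξv‖ := norm_add_le _ _
      _ ≤ ‖D δ‖ + 2 * ‖D δ‖ := by rw [norm_neg]; linarith
      _ = 3 * ‖D δ‖ := by ring
      _ ≤ 3 * C * ‖δ‖ := by nlinarith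

end Helpers

/-- (Existence and uniqueness for the bicharacteristic-amplitude system.)
If `u` is continuous, C² in space, with `u`, `∂ₓu`, `∂ₓ²u` continuous and bounded on
`[0,T] × ℝ³`, then for all initial data `x₀`, `ξ₀ ≠ 0`, `b₀`, there is a unique solution
`(γ, ξ, b)` of the bicharacteristic-amplitude system along `u` on `[0,T]` with
`γ(0) = x₀`, `ξ(0) = ξ₀`, `b(0) = b₀` (and `ξ(t) ≠ 0` for all `t ∈ [0,T]`). -/
theorem stmt4 (T : ℝ) (hT : 0 < T) (u : ℝ → E3 → E3)
    (cont_u : Continuous fun q : ℝ × E3 => u q.1 q.2)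
    (u_space_C2 : ∀ t, ContDiff ℝ 2 (u t))
    (cont_du : Continuous fun q : ℝ × E3 => fderiv ℝ (u q.1) q.2)
    (cont_d2u : Continuous fun q : ℝ × E3 => fderiv ℝ (fderiv ℝ (u q.1)) q.2)
    (bdd : ∃ C : ℝ, ∀ t ∈ Icc 0 T, ∀ x : E3, ‖u t x‖ ≤ C ∧ ‖fderiv ℝ (u t) x‖ ≤ C ∧
      ‖fderiv ℝ (fderiv ℝ (u t)) x‖ ≤ C)
    (x₀ ξ₀ b₀ : E3) (hξ₀ : ξ₀ ≠ 0) :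
    ∃ γ ξ b : ℝ → E3,
      γ 0 = x₀ ∧ ξ 0 = ξ₀ ∧ b 0 = b₀ ∧
      IsBicharSolution u T γ ξ b ∧
      ∀ γ' ξ' b' : ℝ → E3, γ' 0 = x₀ → ξ' 0 = ξ₀ → b' 0 = b₀ →
        IsBicharSolution u T γ' ξ' b' →
        ∀ t ∈ Icc 0 T, γ' t = γ t ∧ ξ' t = ξ t ∧ b' t = b t := by
  classical
  obtain ⟨C, hC⟩ := bdd
  have hC0 : 0 ≤ C := (norm_nonneg _).trans (hC 0 (left_mem_Icc.2 hT.le) 0).1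
  set cl : ℝ → ℝ := fun t => max 0 (min t T) with hcl
  have hclmem : ∀ t, cl t ∈ Icc 0 T :=
    fun t => ⟨le_max_left _ _, max_le hT.le (min_le_right _ _)⟩
  have hcleq : ∀ t ∈ Icc 0 T, cl t = t := by
    intro t ht
    rw [hcl]; simp only
    rw [min_eq_left ht.2, max_eq_right ht.1]
  have hclcont : Continuous cl := continuous_const.max (continuous_id.min continuous_const)
  have hub : ∀ (t : ℝ) (x : E3), ‖u (cl t) x‖ ≤ C := fun t x => (hC _ (hclmem t) x).1
  have hDb : ∀ (t : ℝ) (x : E3), ‖fderiv ℝ (u (cl t)) x‖ ≤ C := fun t x => (hC _ (hclmem t) x).2.1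
  set Kc : NNReal := ⟨C, hC0⟩ with hKc
  set K2 : NNReal := ⟨3 * C, by positivity⟩ with hK2
  have hulip : ∀ s ∈ Icc 0 T, LipschitzWith Kc (u s) := by
    intro s hs
    apply lipschitzWith_of_nnnorm_fderiv_le ((u_space_C2 s).differentiable two_ne_zero)
    intro x
    rw [← NNReal.coe_le_coe, coe_nnnorm]
    exact (hC s hs x).2.1
  -- the γ equation
  set F₁ : ℝ → E3 → E3 := fun t x => u (cl t) x with hF₁
  obtain ⟨γ, hγ0, hγw⟩ := exists_sol_bdd F₁ (a := -3) (b := T + 3)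
    (by linarith) (by linarith) C Kc
    (fun t _ x => hub t x)
    (fun t _ => hulip (cl t) (hclmem t))
    (fun x => (cont_u.comp (hclcont.prodMk continuous_const)).continuousOn) x₀
  have hγ : ∀ t ∈ Ioo (-3 : ℝ) (T + 3), HasDerivAt γ (u (cl t) (γ t)) t := fun t ht =>
    (hγw t (Ioo_subset_Icc_self ht)).hasDerivAt (Icc_mem_nhds ht.1 ht.2)
  have hγcont : ContinuousOn γ (Icc (-3 : ℝ) (T + 3)) :=
    fun t ht => (hγw t ht).continuousWithinAt
  have hcontD : ContinuousOn (fun t => fderiv ℝ (u (cl t)) (γ t)) (Icc (-2 : ℝ) (T + 2)) := by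
    exact cont_du.comp_continuousOn ((hclcont.continuousOn).prodMk
      (hγcont.mono (Icc_subset_Icc (by norm_num) (by norm_num))))
  -- the ξ equation
  set F₂ : ℝ → E3 → E3 := fun t w => -jacT (u (cl t)) (γ t) w with hF₂
  have hlip₂ : ∀ t : ℝ, LipschitzWith K2 (F₂ t) := by
    intro t
    apply LipschitzWith.of_dist_le_mul
    intro w w'
    rw [dist_eq_norm, dist_eq_norm]
    simp only [hF₂]
    rw [neg_sub_neg, ← norm_neg, neg_sub, jacT_sub]
    exact (jacT_norm_le _ (hDb t (γ t))).trans (by rw [hK2]; show 3 * (C * ‖w - w'‖) ≤ 3 * C * ‖w - w'‖; linarith)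
  have h0₂ : ∀ t : ℝ, F₂ t 0 = 0 := by
    intro t; simp only [hF₂, jacT_zero, neg_zero]
  obtain ⟨ξc, hξc0, hξd⟩ := exists_sol_lin F₂ (a := -2) (b := T + 2)
    (by norm_num) (by linarith) K2
    (fun t _ => hlip₂ t) (fun t _ => h0₂ t)
    (fun w => (contOn_jacT hcontD w).neg) ξ₀
  have hξcont : ContinuousOn ξc (Icc (-1 : ℝ) (T + 1)) := fun t ht =>
    ((hξd t ⟨by linarith [ht.1], by linarith [ht.2]⟩).continuousAt).continuousWithinAt
  -- ξ never vanishes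
  have hξne : ∀ t ∈ Icc (-1 : ℝ) (T + 1), ξc t ≠ 0 := by
    intro t ht hzero
    have h32 : (-(3:ℝ)/2) < 0 := by norm_num
    have heq : EqOn ξc (fun _ => (0 : E3)) (Icc (-(3:ℝ)/2) (T + 3/2)) := by
      apply ODE_solution_unique_of_mem_Icc (v := F₂) (s := fun _ => univ) (K := K2)
        (t₀ := t) (a := -(3:ℝ)/2) (b := T + 3/2)
        (fun s _ => (hlip₂ s).lipschitzOnWith)
        ⟨by linarith [ht.1], by linarith [ht.2]⟩
      · intro s hs
        exact ((hξd s ⟨by linarith [hs.1], by linarith [hs.2]⟩).continuousAt).continuousWithinAt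
      · intro s hs
        exact hξd s ⟨by linarith [hs.1], by linarith [hs.2]⟩
      · exact fun _ _ => mem_univ _
      · exact continuousOn_const
      · intro s hs
        simpa [h0₂ s] using (hasDerivAt_const s (0 : E3))
      · exact fun _ _ => mem_univ _
      · exact hzero
    have h0mem : (0 : ℝ) ∈ Icc (-(3:ℝ)/2) (T + 3/2) := ⟨by norm_num, by linarith⟩
    exact hξ₀ (by rw [← hξc0]; exact heq h0mem)
  -- the b equation
  set F₃ : ℝ → E3 → E3 := fun t w =>
    -(fderiv ℝ (u (cl t)) (γ t) w) +
      (2 * ⟪ξc t, fderiv ℝ (u (cl t)) (γ t) w⟫ / ‖ξc t‖ ^ 2) • ξc t with hF₃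
  have hlip₃ : ∀ t : ℝ, LipschitzWith K2 (F₃ t) := by
    intro t
    apply LipschitzWith.of_dist_le_mul
    intro w w'
    rw [dist_eq_norm, dist_eq_norm]
    simp only [hF₃]
    rw [F3_sub]
    exact (F3_bound (hDb t (γ t)) _ _).trans (by rw [hK2]; exact le_rfl)
  have h0₃ : ∀ t : ℝ, F₃ t 0 = 0 := by
    intro t; simp [hF₃]
  have hcont₃ : ∀ w : E3, ContinuousOn (fun t => F₃ t w) (Icc (-1 : ℝ) (T + 1)) := by
    intro w
    have hsub : Icc (-1 : ℝ) (T + 1) ⊆ Icc (-2 : ℝ) (T + 2) :=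
      Icc_subset_Icc (by norm_num) (by norm_num)
    have hDw : ContinuousOn (fun t => fderiv ℝ (u (cl t)) (γ t) w) (Icc (-1 : ℝ) (T + 1)) :=
      (hcontD.mono hsub).clm_apply continuousOn_const
    apply ContinuousOn.add hDw.neg
    apply ContinuousOn.fun_smul _ hξcont
    apply ContinuousOn.div (continuousOn_const.mul (hξcont.inner hDw)) (hξcont.norm.pow 2)
    intro t ht
    simpa using hξne t ht
  obtain ⟨bc, hbc0, hbd⟩ := exists_sol_lin F₃ (a := -1) (b := T + 1)
    (by norm_num) (by linarith) K2
    (fun t _ => hlip₃ t) (fun t _ => h0₃ t) hcont₃ b₀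
  -- membership helpers
  have hmem1 : ∀ t ∈ Icc 0 T, t ∈ Ioo (-1 : ℝ) (T + 1) :=
    fun t ht => ⟨by linarith [ht.1], by linarith [ht.2]⟩
  have hmem2 : ∀ t ∈ Icc 0 T, t ∈ Ioo (-2 : ℝ) (T + 2) :=
    fun t ht => ⟨by linarith [ht.1], by linarith [ht.2]⟩
  have hmem3 : ∀ t ∈ Icc 0 T, t ∈ Ioo (-3 : ℝ) (T + 3) :=
    fun t ht => ⟨by linarith [ht.1], by linarith [ht.2]⟩
  have hmem4 : ∀ t ∈ Icc 0 T, t ∈ Icc (-1 : ℝ) (T + 1) :=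
    fun t ht => ⟨by linarith [ht.1], by linarith [ht.2]⟩
  -- our solution satisfies the system
  have hsolγ : ∀ t ∈ Icc 0 T, HasDerivAt γ (u t (γ t)) t := by
    intro t ht
    have h := hγ t (hmem3 t ht)
    rwa [hcleq t ht] at h
  have hsolξ : ∀ t ∈ Icc 0 T, HasDerivAt ξc (-jacT (u t) (γ t) (ξc t)) t := by
    intro t ht
    have h := hξd t (hmem2 t ht)
    simp only [hF₂] at h
    rwa [hcleq t ht] at h
  have hsolb : ∀ t ∈ Icc 0 T, HasDerivAt bc
      (-(fderiv ℝ (u t) (γ t) (bc t)) +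
        (2 * ⟪ξc t, fderiv ℝ (u t) (γ t) (bc t)⟫ / ‖ξc t‖ ^ 2) • ξc t) t := by
    intro t ht
    have h := hbd t (hmem1 t ht)
    simp only [hF₃] at h
    rwa [hcleq t ht] at h
  have hbig : IsBicharSolution u T γ ξc bc :=
    { xi_ne := fun t ht => hξne t (hmem4 t ht)
      hgamma := hsolγ
      hxi := hsolξ
      hb := hsolb }
  refine ⟨γ, ξc, bc, hγ0, hξc0, hbc0, hbig, ?_⟩
  -- uniqueness
  intro γ' ξ' b' hg0 hx0 hb0' sol
  have hγ'c : ContinuousOn γ' (Icc 0 T) :=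
    fun t ht => (sol.hgamma t ht).continuousAt.continuousWithinAt
  have hγc : ContinuousOn γ (Icc 0 T) :=
    fun t ht => (hsolγ t ht).continuousAt.continuousWithinAt
  have hEqγ : EqOn γ' γ (Icc 0 T) := by
    apply ODE_solution_unique_of_mem_Icc_right (v := F₁) (s := fun _ => univ) (K := Kc)
      (fun s _ => (hulip (cl s) (hclmem s)).lipschitzOnWith) hγ'c
    · intro t ht
      have ht' := Ico_subset_Icc_self ht
      simp only [hF₁]
      rw [hcleq t ht']
      exact (sol.hgamma t ht').hasDerivWithinAt
    · exact fun _ _ => mem_univ _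
    · exact hγc
    · intro t ht
      have ht' := Ico_subset_Icc_self ht
      simp only [hF₁]
      rw [hcleq t ht']
      exact (hsolγ t ht').hasDerivWithinAt
    · exact fun _ _ => mem_univ _
    · rw [hg0, hγ0]
  have hξ'c : ContinuousOn ξ' (Icc 0 T) :=
    fun t ht => (sol.hxi t ht).continuousAt.continuousWithinAt
  have hξcc : ContinuousOn ξc (Icc 0 T) :=
    fun t ht => (hsolξ t ht).continuousAt.continuousWithinAt
  have hEqξ : EqOn ξ' ξc (Icc 0 T) := by
    apply ODE_solution_unique_of_mem_Icc_right (v := F₂) (s := fun _ => univ) (K := K2)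
      (fun s _ => (hlip₂ s).lipschitzOnWith) hξ'c
    · intro t ht
      have ht' := Ico_subset_Icc_self ht
      simp only [hF₂]
      rw [hcleq t ht', ← hEqγ ht']
      exact (sol.hxi t ht').hasDerivWithinAt
    · exact fun _ _ => mem_univ _
    · exact hξcc
    · intro t ht
      have ht' := Ico_subset_Icc_self ht
      simp only [hF₂]
      rw [hcleq t ht']
      exact (hsolξ t ht').hasDerivWithinAt
    · exact fun _ _ => mem_univ _
    · rw [hx0, hξc0]
  have hb'c : ContinuousOn b' (Icc 0 T) :=
    fun t ht => (sol.hb t ht).continuousAt.continuousWithinAt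
  have hbcc : ContinuousOn bc (Icc 0 T) :=
    fun t ht => (hsolb t ht).continuousAt.continuousWithinAt
  have hEqb : EqOn b' bc (Icc 0 T) := by
    apply ODE_solution_unique_of_mem_Icc_right (v := F₃) (s := fun _ => univ) (K := K2)
      (fun s _ => (hlip₃ s).lipschitzOnWith) hb'c
    · intro t ht
      have ht' := Ico_subset_Icc_self ht
      simp only [hF₃]
      rw [hcleq t ht', ← hEqγ ht', ← hEqξ ht']
      exact (sol.hb t ht').hasDerivWithinAt
    · exact fun _ _ => mem_univ _
    · exact hbcc
    · intro t ht
      have ht' := Ico_subset_Icc_self ht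
      simp only [hF₃]
      rw [hcleq t ht']
      exact (hsolb t ht').hasDerivWithinAt
    · exact fun _ _ => mem_univ _
    · rw [hb0', hbc0]
  exact fun t ht => ⟨hEqγ ht, hEqξ ht, hEqb ht⟩
end
end

section
/- Let T>0 and let u : ℝ → ℝ³ → ℝ³ be continuous and C¹ in the space variable with ∂ₓu continuous on [0,T]×ℝ³. Let (γ,ξ,b) be a solution of the bicharacteristic-amplitude system along u on [0,T] (with ξ(t) ≠ 0 for all t). Then ⟨b(t), ξ(t)⟩ = ⟨b(0), ξ(0)⟩ for all t ∈ [0,T]; in particular, if ⟨b(0),ξ(0)⟩ = 0 then b(t) is orthogonal to ξ(t) for every t ∈ [0,T]. -/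
noncomputable section

open MeasureTheory Set
open scoped RealInnerProductSpace ENNReal

lemma e3_sum (x : E3) : ∑ i, x i • e3 i = x := by
  have := (EuclideanSpace.basisFun (Fin 3) ℝ).sum_repr x
  simpa [e3, EuclideanSpace.basisFun_apply, EuclideanSpace.basisFun_repr] using this

lemma inner_jacT (f : E3 → E3) (x ξ v : E3) :
    ⟪v, jacT f x ξ⟫ = ⟪ξ, fderiv ℝ f x v⟫ := by
  have h : fderiv ℝ f x v = ∑ i, v i • fderiv ℝ f x (e3 i) := by
    conv_lhs => rw [← e3_sum v]
    simp [map_sum]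
  rw [h, inner_sum]
  simp only [real_inner_smul_right]
  rw [jacT, PiLp.inner_apply]
  simp [mul_comm]

/-- (Conservation of `⟨b, ξ⟩` — incompressibility in the WKB expansion.)
Along any solution of the bicharacteristic-amplitude system, `⟨b(t), ξ(t)⟩` is constant;
in particular, if `⟨b(0), ξ(0)⟩ = 0` then `b(t) ⊥ ξ(t)` for every `t ∈ [0,T]`. -/
theorem stmt6 (T : ℝ) (hT : 0 < T) (u : ℝ → E3 → E3)
    (cont_u : Continuous fun q : ℝ × E3 => u q.1 q.2)
    (u_space_C1 : ∀ t, ContDiff ℝ 1 (u t))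
    (cont_du : Continuous fun q : ℝ × E3 => fderiv ℝ (u q.1) q.2)
    (γ ξ b : ℝ → E3) (hbic : IsBicharSolution u T γ ξ b) :
    (∀ t ∈ Icc 0 T, ⟪b t, ξ t⟫ = ⟪b 0, ξ 0⟫) ∧
    (⟪b 0, ξ 0⟫ = 0 → ∀ t ∈ Icc 0 T, ⟪b t, ξ t⟫ = 0) := by
  have key : ∀ t ∈ Icc 0 T, HasDerivAt (fun s => ⟪b s, ξ s⟫) 0 t := by
    intro t ht
    have hb := hbic.hb t ht
    have hx := hbic.hxi t ht
    have h := hb.inner ℝ hx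
    refine h.congr_deriv ?_
    have hxn : ‖ξ t‖ ^ 2 ≠ 0 := by
      simpa using hbic.xi_ne t ht
    rw [inner_neg_right, inner_jacT, inner_add_left, inner_neg_left,
      real_inner_smul_left, real_inner_self_eq_norm_sq,
      div_mul_cancel₀ _ hxn, real_inner_comm ((fderiv ℝ (u t) (γ t)) (b t)) (ξ t)]
    ring
  have hc : ∀ t ∈ Icc 0 T, ⟪b t, ξ t⟫ = ⟪b 0, ξ 0⟫ := by
    have := constant_of_has_deriv_right_zero (f := fun s => ⟪b s, ξ s⟫) (a := 0) (b := T)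
      (fun s hs => ((key s hs).continuousAt).continuousWithinAt)
      (fun s hs => ((key s ⟨hs.1, hs.2.le⟩).hasDerivWithinAt))
    exact this
  exact ⟨hc, fun h0 t ht => by rw [hc t ht, h0]⟩
end
end

section
/- Let T>0 and let u : ℝ → ℝ³ → ℝ³ be continuous and C¹ in the space variable with ∂ₓu continuous on [0,T]×ℝ³ and div u(t,x) = 0 for all (t,x) ∈ [0,T]×ℝ³. Let (γ,ξ,b) and (γ,ξ,b̃) be two solutions of the bicharacteristic-amplitude system along u on [0,T] sharing the same curves γ and ξ. Assume the vectors b(0), b̃(0), ξ(0) are linearly independent and ⟨b(0),ξ(0)⟩ = ⟨b̃(0),ξ(0)⟩ = 0. Then ⟨b(t) × b̃(t), ξ(t)⟩ = ⟨b(0) × b̃(0), ξ(0)⟩ for all t ∈ [0,T], i.e. the determinant of the matrix with columns b(t), b̃(t), ξ(t) is constant in time; in particular b(t), b̃(t), ξ(t) remain linearly independent. -/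
noncomputable section

open MeasureTheory Set
open scoped RealInnerProductSpace ENNReal

section AuxStmt7

lemma inner3 (x y : E3) : ⟪x, y⟫ = x 0 * y 0 + x 1 * y 1 + x 2 * y 2 := by
  simp [PiLp.inner_apply, Fin.sum_univ_three, RCLike.inner_apply]; ring

lemma sum_smul_e3 (x : E3) : x 0 • e3 0 + x 1 • e3 1 + x 2 • e3 2 = x := by
  ext j; fin_cases j <;> simp [e3, EuclideanSpace.single_apply]

lemma hd_comp {g : ℝ → E3} {v : E3} {t : ℝ} (i : Fin 3) (h : HasDerivAt g v t) :
    HasDerivAt (fun s => g s i) (v i) t := by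
  exact
    (EuclideanSpace.proj (𝕜 := ℝ) i).hasFDerivAt.comp_hasDerivAt t h

lemma clm_apply3 (L : E3 →L[ℝ] E3) (v : E3) (i : Fin 3) :
    L v i = v 0 * L (e3 0) i + v 1 * L (e3 1) i + v 2 * L (e3 2) i := by
  conv_lhs => rw [← sum_smul_e3 v]
  simp [e3]

lemma li_iff (v w x : E3) : LinearIndependent ℝ ![v, w, x] ↔ ⟪cross3 v w, x⟫ ≠ 0 := by
  have hf : LinearIndependent ℝ ![v, w, x] ↔
      LinearIndependent ℝ (fun i => (Matrix.of ![(WithLp.equiv 2 (Fin 3 → ℝ)) v,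
        (WithLp.equiv 2 (Fin 3 → ℝ)) w, (WithLp.equiv 2 (Fin 3 → ℝ)) x] :
          Matrix (Fin 3) (Fin 3) ℝ) i) := by
    rw [show (fun i => (Matrix.of ![(WithLp.equiv 2 (Fin 3 → ℝ)) v,
        (WithLp.equiv 2 (Fin 3 → ℝ)) w, (WithLp.equiv 2 (Fin 3 → ℝ)) x] :
          Matrix (Fin 3) (Fin 3) ℝ) i)
      = (WithLp.linearEquiv 2 ℝ (Fin 3 → ℝ) : E3 →ₗ[ℝ] (Fin 3 → ℝ)) ∘ ![v, w, x] by
        funext i; fin_cases i <;> rfl]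
    exact ((WithLp.linearEquiv 2 ℝ (Fin 3 → ℝ)).toLinearMap.linearIndependent_iff
      (WithLp.linearEquiv 2 ℝ (Fin 3 → ℝ)).ker).symm
  rw [hf]
  change LinearIndependent ℝ (Matrix.row (Matrix.of ![(WithLp.equiv 2 (Fin 3 → ℝ)) v,
    (WithLp.equiv 2 (Fin 3 → ℝ)) w, (WithLp.equiv 2 (Fin 3 → ℝ)) x])) ↔ _
  rw [Matrix.linearIndependent_rows_iff_isUnit, Matrix.isUnit_iff_isUnit_det,
    isUnit_iff_ne_zero, Matrix.det_fin_three]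
  constructor <;> intro h h' <;> apply h
  · rw [inner3] at h'; simp only [Matrix.of_apply] at *
    simp only [cross3, WithLp.equiv_symm_apply, PiLp.toLp_apply] at h'
    simp only [Matrix.cons_val_zero, Matrix.cons_val_one, Matrix.head_cons,
      Matrix.cons_val_two, Matrix.tail_cons, WithLp.equiv_apply] at *
    linarith [h']
  · rw [inner3]
    simp only [cross3, WithLp.equiv_symm_apply, PiLp.toLp_apply, Matrix.of_apply, Matrix.cons_val_zero,
      Matrix.cons_val_one, Matrix.head_cons, Matrix.cons_val_two, Matrix.tail_cons,
      WithLp.equiv_apply] at *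
    linarith [h']

lemma orth_id (a00 a01 a02 a10 a11 a12 a20 a21 a22 B0 B1 B2 X0 X1 X2 k1 : ℝ)
    (hNe : X0^2 + X1^2 + X2^2 ≠ 0)
    (hk : k1 * (X0^2 + X1^2 + X2^2) = 2 * (X0 * (a00*B0 + a01*B1 + a02*B2)
      + X1 * (a10*B0 + a11*B1 + a12*B2) + X2 * (a20*B0 + a21*B1 + a22*B2))) :
    (-(a00*B0 + a01*B1 + a02*B2) + k1*X0) * X0 + B0 * -(X0*a00 + X1*a10 + X2*a20)
    + ((-(a10*B0 + a11*B1 + a12*B2) + k1*X1) * X1 + B1 * -(X0*a01 + X1*a11 + X2*a21))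
    + ((-(a20*B0 + a21*B1 + a22*B2) + k1*X2) * X2 + B2 * -(X0*a02 + X1*a12 + X2*a22)) = 0 := by
  apply mul_left_cancel₀ hNe
  rw [mul_zero]
  linear_combination (X0^2 + X1^2 + X2^2) * hk

lemma key_id2 (a00 a01 a02 a10 a11 a12 a20 a21 a22 B0 B1 B2 C0 C1 C2 X0 X1 X2 k1 k2 : ℝ)
    (hNe : X0^2 + X1^2 + X2^2 ≠ 0)
    (htr : a00 + a11 + a22 = 0)
    (hbx : B0 * X0 + B1 * X1 + B2 * X2 = 0)
    (hcx : C0 * X0 + C1 * X1 + C2 * X2 = 0) :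
    ((-(a10*B0 + a11*B1 + a12*B2) + k1*X1) * C2 + B1 * (-(a20*C0 + a21*C1 + a22*C2) + k2*X2)
      - ((-(a20*B0 + a21*B1 + a22*B2) + k1*X2) * C1
        + B2 * (-(a10*C0 + a11*C1 + a12*C2) + k2*X1))) * X0
      + (B1*C2 - B2*C1) * -(X0*a00 + X1*a10 + X2*a20)
    + (((-(a20*B0 + a21*B1 + a22*B2) + k1*X2) * C0
        + B2 * (-(a00*C0 + a01*C1 + a02*C2) + k2*X0)
      - ((-(a00*B0 + a01*B1 + a02*B2) + k1*X0) * C2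
        + B0 * (-(a20*C0 + a21*C1 + a22*C2) + k2*X2))) * X1
      + (B2*C0 - B0*C2) * -(X0*a01 + X1*a11 + X2*a21))
    + (((-(a00*B0 + a01*B1 + a02*B2) + k1*X0) * C1
        + B0 * (-(a10*C0 + a11*C1 + a12*C2) + k2*X1)
      - ((-(a10*B0 + a11*B1 + a12*B2) + k1*X1) * C0
        + B1 * (-(a00*C0 + a01*C1 + a02*C2) + k2*X0))) * X2
      + (B0*C1 - B1*C0) * -(X0*a02 + X1*a12 + X2*a22)) = 0 := by
  apply mul_left_cancel₀ hNe
  rw [mul_zero]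
  linear_combination
    (-(((B1*C2 - B2*C1)*X0 + (B2*C0 - B0*C2)*X1 + (B0*C1 - B1*C0)*X2)) * (X0^2+X1^2+X2^2)) * htr
    + (((a00*X0 + a01*X1 + a02*X2) - (a00*X0 + a10*X1 + a20*X2)) * (C2*X1 - C1*X2)
      + ((a10*X0 + a11*X1 + a12*X2) - (a01*X0 + a11*X1 + a21*X2)) * (C0*X2 - C2*X0)
      + ((a20*X0 + a21*X1 + a22*X2) - (a02*X0 + a12*X1 + a22*X2)) * (C1*X0 - C0*X1)) * hbx
    + (((a00*X0 + a01*X1 + a02*X2) - (a00*X0 + a10*X1 + a20*X2)) * (B1*X2 - B2*X1)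
      + ((a10*X0 + a11*X1 + a12*X2) - (a01*X0 + a11*X1 + a21*X2)) * (B2*X0 - B0*X2)
      + ((a20*X0 + a21*X1 + a22*X2) - (a02*X0 + a12*X1 + a22*X2)) * (B0*X1 - B1*X0)) * hcx

lemma bcomp {u : ℝ → E3 → E3} {T : ℝ} {γ ξ b : ℝ → E3} {t : ℝ}
    (h1 : IsBicharSolution u T γ ξ b) (ht : t ∈ Icc 0 T) (i : Fin 3) :
    HasDerivAt (fun s => b s i)
      (-(b t 0 * fderiv ℝ (u t) (γ t) (e3 0) i + b t 1 * fderiv ℝ (u t) (γ t) (e3 1) i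
          + b t 2 * fderiv ℝ (u t) (γ t) (e3 2) i)
        + 2 * ⟪ξ t, fderiv ℝ (u t) (γ t) (b t)⟫ / ‖ξ t‖ ^ 2 * ξ t i) t := by
  have h := hd_comp i (h1.hb t ht)
  convert h using 1
  simp only [PiLp.add_apply, PiLp.neg_apply, PiLp.smul_apply, smul_eq_mul]
  rw [clm_apply3 (fderiv ℝ (u t) (γ t)) (b t) i]

lemma xcomp {u : ℝ → E3 → E3} {T : ℝ} {γ ξ b : ℝ → E3} {t : ℝ}
    (h1 : IsBicharSolution u T γ ξ b) (ht : t ∈ Icc 0 T) (i : Fin 3) :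
    HasDerivAt (fun s => ξ s i)
      (-(ξ t 0 * fderiv ℝ (u t) (γ t) (e3 i) 0 + ξ t 1 * fderiv ℝ (u t) (γ t) (e3 i) 1
          + ξ t 2 * fderiv ℝ (u t) (γ t) (e3 i) 2)) t := by
  have h := hd_comp i (h1.hxi t ht)
  convert h using 1
  simp only [PiLp.neg_apply, jacT, WithLp.equiv_symm_apply, PiLp.toLp_apply]
  rw [inner3]

lemma norm_sq_expand {x : E3} : ‖x‖ ^ 2 = x 0 ^ 2 + x 1 ^ 2 + x 2 ^ 2 := by
  rw [← real_inner_self_eq_norm_sq, inner3]; ring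

lemma orth_const {u : ℝ → E3 → E3} {T : ℝ} {γ ξ b : ℝ → E3}
    (h1 : IsBicharSolution u T γ ξ b) (ho : ⟪b 0, ξ 0⟫ = 0) :
    ∀ t ∈ Icc 0 T, ⟪b t, ξ t⟫ = 0 := by
  have key : ∀ t ∈ Icc 0 T,
      HasDerivAt (fun s => b s 0 * ξ s 0 + b s 1 * ξ s 1 + b s 2 * ξ s 2) 0 t := by
    intro t ht
    have hNe0 : ‖ξ t‖ ^ 2 ≠ 0 := pow_ne_zero _ (norm_ne_zero_iff.mpr (h1.xi_ne t ht))
    have hNe : ξ t 0 ^ 2 + ξ t 1 ^ 2 + ξ t 2 ^ 2 ≠ 0 := norm_sq_expand ▸ hNe0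
    have hk : (2 * ⟪ξ t, fderiv ℝ (u t) (γ t) (b t)⟫ / ‖ξ t‖ ^ 2)
        * (ξ t 0 ^ 2 + ξ t 1 ^ 2 + ξ t 2 ^ 2)
      = 2 * (ξ t 0 * (fderiv ℝ (u t) (γ t) (e3 0) 0 * b t 0 + fderiv ℝ (u t) (γ t) (e3 1) 0 * b t 1
              + fderiv ℝ (u t) (γ t) (e3 2) 0 * b t 2)
          + ξ t 1 * (fderiv ℝ (u t) (γ t) (e3 0) 1 * b t 0 + fderiv ℝ (u t) (γ t) (e3 1) 1 * b t 1
              + fderiv ℝ (u t) (γ t) (e3 2) 1 * b t 2)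
          + ξ t 2 * (fderiv ℝ (u t) (γ t) (e3 0) 2 * b t 0 + fderiv ℝ (u t) (γ t) (e3 1) 2 * b t 1
              + fderiv ℝ (u t) (γ t) (e3 2) 2 * b t 2)) := by
      rw [← norm_sq_expand, div_mul_cancel₀ _ hNe0, inner3,
        clm_apply3 (fderiv ℝ (u t) (γ t)) (b t) 0, clm_apply3 (fderiv ℝ (u t) (γ t)) (b t) 1,
        clm_apply3 (fderiv ℝ (u t) (γ t)) (b t) 2]
      ring
    have h0 := orth_id (fderiv ℝ (u t) (γ t) (e3 0) 0) (fderiv ℝ (u t) (γ t) (e3 1) 0)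
      (fderiv ℝ (u t) (γ t) (e3 2) 0) (fderiv ℝ (u t) (γ t) (e3 0) 1)
      (fderiv ℝ (u t) (γ t) (e3 1) 1) (fderiv ℝ (u t) (γ t) (e3 2) 1)
      (fderiv ℝ (u t) (γ t) (e3 0) 2) (fderiv ℝ (u t) (γ t) (e3 1) 2)
      (fderiv ℝ (u t) (γ t) (e3 2) 2) (b t 0) (b t 1) (b t 2) (ξ t 0) (ξ t 1) (ξ t 2)
      (2 * ⟪ξ t, fderiv ℝ (u t) (γ t) (b t)⟫ / ‖ξ t‖ ^ 2) hNe hk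
    have big := (((bcomp h1 ht 0).mul (xcomp h1 ht 0)).add
      ((bcomp h1 ht 1).mul (xcomp h1 ht 1))).add ((bcomp h1 ht 2).mul (xcomp h1 ht 2))
    refine big.congr_deriv ?_
    linear_combination h0
  have hconst := constant_of_has_deriv_right_zero
    (f := fun s => b s 0 * ξ s 0 + b s 1 * ξ s 1 + b s 2 * ξ s 2) (a := 0) (b := T)
    (fun s hs => (key s hs).continuousAt.continuousWithinAt)
    (fun s hs => (key s (Ico_subset_Icc_self hs)).hasDerivWithinAt)
  intro t ht
  rw [inner3] at ho ⊢
  exact (hconst t ht).trans ho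

end AuxStmt7

/-- (Conservation of the determinant `det(b, b̃, ξ) = ⟨b × b̃, ξ⟩`.)
For a divergence-free `u` and two solutions `(γ, ξ, b)`, `(γ, ξ, b̃)` of the
bicharacteristic-amplitude system sharing the same `γ` and `ξ`, with `b(0), b̃(0), ξ(0)`
linearly independent and `⟨b(0),ξ(0)⟩ = ⟨b̃(0),ξ(0)⟩ = 0`, the quantity
`⟨b(t) × b̃(t), ξ(t)⟩` is constant on `[0,T]`; in particular `b(t), b̃(t), ξ(t)` remain
linearly independent. -/
theorem stmt7 (T : ℝ) (hT : 0 < T) (u : ℝ → E3 → E3)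
    (cont_u : Continuous fun q : ℝ × E3 => u q.1 q.2)
    (u_space_C1 : ∀ t, ContDiff ℝ 1 (u t))
    (cont_du : Continuous fun q : ℝ × E3 => fderiv ℝ (u q.1) q.2)
    (hdiv : ∀ t ∈ Icc 0 T, ∀ x : E3, div3 (u t) x = 0)
    (γ ξ b btil : ℝ → E3)
    (h1 : IsBicharSolution u T γ ξ b) (h2 : IsBicharSolution u T γ ξ btil)
    (hind : LinearIndependent ℝ ![b 0, btil 0, ξ 0])
    (ho1 : ⟪b 0, ξ 0⟫ = 0) (ho2 : ⟪btil 0, ξ 0⟫ = 0) :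
    ∀ t ∈ Icc 0 T,
      ⟪cross3 (b t) (btil t), ξ t⟫ = ⟪cross3 (b 0) (btil 0), ξ 0⟫ ∧
      LinearIndependent ℝ ![b t, btil t, ξ t] := by
  have horth1 := orth_const h1 ho1
  have horth2 := orth_const h2 ho2
  have key : ∀ t ∈ Icc 0 T, HasDerivAt (fun s =>
      (b s 1 * btil s 2 - b s 2 * btil s 1) * ξ s 0
      + (b s 2 * btil s 0 - b s 0 * btil s 2) * ξ s 1
      + (b s 0 * btil s 1 - b s 1 * btil s 0) * ξ s 2) 0 t := by
    intro t ht
    have hNe0 : ‖ξ t‖ ^ 2 ≠ 0 := pow_ne_zero _ (norm_ne_zero_iff.mpr (h1.xi_ne t ht))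
    have hNe : ξ t 0 ^ 2 + ξ t 1 ^ 2 + ξ t 2 ^ 2 ≠ 0 := norm_sq_expand ▸ hNe0
    have htr : fderiv ℝ (u t) (γ t) (e3 0) 0 + fderiv ℝ (u t) (γ t) (e3 1) 1
        + fderiv ℝ (u t) (γ t) (e3 2) 2 = 0 := by
      simpa [div3, pd3, Fin.sum_univ_three] using hdiv t ht (γ t)
    have hbx : b t 0 * ξ t 0 + b t 1 * ξ t 1 + b t 2 * ξ t 2 = 0 := by
      have := horth1 t ht; rwa [inner3] at this
    have hcx : btil t 0 * ξ t 0 + btil t 1 * ξ t 1 + btil t 2 * ξ t 2 = 0 := by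
      have := horth2 t ht; rwa [inner3] at this
    have h0 := key_id2 (fderiv ℝ (u t) (γ t) (e3 0) 0) (fderiv ℝ (u t) (γ t) (e3 1) 0)
      (fderiv ℝ (u t) (γ t) (e3 2) 0) (fderiv ℝ (u t) (γ t) (e3 0) 1)
      (fderiv ℝ (u t) (γ t) (e3 1) 1) (fderiv ℝ (u t) (γ t) (e3 2) 1)
      (fderiv ℝ (u t) (γ t) (e3 0) 2) (fderiv ℝ (u t) (γ t) (e3 1) 2)
      (fderiv ℝ (u t) (γ t) (e3 2) 2) (b t 0) (b t 1) (b t 2)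
      (btil t 0) (btil t 1) (btil t 2) (ξ t 0) (ξ t 1) (ξ t 2)
      (2 * ⟪ξ t, fderiv ℝ (u t) (γ t) (b t)⟫ / ‖ξ t‖ ^ 2)
      (2 * ⟪ξ t, fderiv ℝ (u t) (γ t) (btil t)⟫ / ‖ξ t‖ ^ 2) hNe htr hbx hcx
    have big := (((((bcomp h1 ht 1).mul (bcomp h2 ht 2)).sub
        ((bcomp h1 ht 2).mul (bcomp h2 ht 1))).mul (xcomp h1 ht 0)).add
      ((((bcomp h1 ht 2).mul (bcomp h2 ht 0)).sub
        ((bcomp h1 ht 0).mul (bcomp h2 ht 2))).mul (xcomp h1 ht 1))).add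
      ((((bcomp h1 ht 0).mul (bcomp h2 ht 1)).sub
        ((bcomp h1 ht 1).mul (bcomp h2 ht 0))).mul (xcomp h1 ht 2))
    refine big.congr_deriv ?_
    simp only [Pi.mul_apply, Pi.sub_apply]
    linear_combination h0
  have hconst := constant_of_has_deriv_right_zero
    (f := fun s => (b s 1 * btil s 2 - b s 2 * btil s 1) * ξ s 0
      + (b s 2 * btil s 0 - b s 0 * btil s 2) * ξ s 1
      + (b s 0 * btil s 1 - b s 1 * btil s 0) * ξ s 2) (a := 0) (b := T)
    (fun s hs => (key s hs).continuousAt.continuousWithinAt)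
    (fun s hs => (key s (Ico_subset_Icc_self hs)).hasDerivWithinAt)
  have e1 : ∀ s : ℝ, ⟪cross3 (b s) (btil s), ξ s⟫ =
      (b s 1 * btil s 2 - b s 2 * btil s 1) * ξ s 0
      + (b s 2 * btil s 0 - b s 0 * btil s 2) * ξ s 1
      + (b s 0 * btil s 1 - b s 1 * btil s 0) * ξ s 2 := by
    intro s
    rw [inner3]
    simp only [cross3, WithLp.equiv_symm_apply, PiLp.toLp_apply, Matrix.cons_val_zero, Matrix.cons_val_one,
      Matrix.head_cons, Matrix.cons_val_two, Matrix.tail_cons]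
  have hval : ∀ t ∈ Icc 0 T, ⟪cross3 (b t) (btil t), ξ t⟫ = ⟪cross3 (b 0) (btil 0), ξ 0⟫ := by
    intro t ht
    rw [e1 t, e1 0]
    exact hconst t ht
  intro t ht
  refine ⟨hval t ht, ?_⟩
  rw [li_iff, hval t ht]
  exact (li_iff _ _ _).mp hind
end
end

section
/- Let T>0, let u : [0,T]×ℝ → ℝ be C¹ and satisfy the Burgers equation ∂ₜu + u ∂ₓu = 0 pointwise on [0,T]×ℝ, with u and ∂ₓu bounded. Let v : [0,T]×ℝ → ℝ be C¹, with v(t,·) compactly supported for each t (uniformly: there is R>0 with v(t,x)=0 for |x|≥R and all t), satisfying the linearized Burgers equation ∂ₜv + ∂ₓ(u v) = 0 pointwise on [0,T]×ℝ. Then the L¹ norm of v is conserved: ∫_ℝ |v(T,x)| dx = ∫_ℝ |v(0,x)| dx. (Hence the L¹ growth ρ_B(T) of the linearized Burgers semigroup equals 1 up to the time of shock formation: solutions remain uniformly stable.) -/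
noncomputable section

open MeasureTheory Set

namespace Stmt14Aux

def eta (ε y : ℝ) : ℝ := Real.sqrt (y^2 + ε^2)
def etad (ε y : ℝ) : ℝ := y / Real.sqrt (y^2 + ε^2)

lemma eta_pos {ε : ℝ} (hε : 0 < ε) (y : ℝ) : 0 < eta ε y :=
  Real.sqrt_pos.2 (by positivity)

lemma eta_ge {ε : ℝ} (hε : 0 < ε) (y : ℝ) : ε ≤ eta ε y := by
  have : ε = Real.sqrt (ε^2) := by rw [Real.sqrt_sq hε.le]
  rw [this, eta]
  exact Real.sqrt_le_sqrt (by nlinarith)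

lemma sq_eta {ε : ℝ} (y : ℝ) : (eta ε y)^2 = y^2 + ε^2 :=
  Real.sq_sqrt (by positivity)

lemma abs_le_eta {ε : ℝ} (y : ℝ) : |y| ≤ eta ε y := by
  have : |y| = Real.sqrt (y^2) := (Real.sqrt_sq_eq_abs y).symm
  rw [this, eta]
  exact Real.sqrt_le_sqrt (by nlinarith)

lemma eta_sub_abs_le {ε : ℝ} (hε : 0 < ε) (y : ℝ) : |eta ε y - abs y| ≤ ε := by
  have h1 := abs_le_eta (ε := ε) y
  have h2 : eta ε y ≤ |y| + ε := by
    have : |y| + ε = Real.sqrt ((|y| + ε)^2) := by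
      rw [Real.sqrt_sq (by positivity)]
    rw [this, eta]
    apply Real.sqrt_le_sqrt
    have : |y|^2 = y^2 := sq_abs y
    nlinarith [abs_nonneg y]
  rw [abs_le]; constructor <;> nlinarith

lemma abs_etad_le_one {ε : ℝ} (hε : 0 < ε) (y : ℝ) : |etad ε y| ≤ 1 := by
  have h : etad ε y = y / eta ε y := rfl
  rw [h, abs_div, abs_of_pos (eta_pos hε y), div_le_one (eta_pos hε y)]
  exact abs_le_eta y

lemma eta_sub_mul_le {ε : ℝ} (hε : 0 < ε) (y : ℝ) : |eta ε y - y * etad ε y| ≤ ε := by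
  have hp := eta_pos hε y
  have hs := sq_eta (ε := ε) y
  have : eta ε y - y * etad ε y = ε^2 / eta ε y := by
    rw [etad]; show eta ε y - y * (y / eta ε y) = ε^2 / eta ε y
    rw [eq_div_iff hp.ne', sub_mul, mul_assoc, div_mul_cancel₀ _ hp.ne']; nlinarith [hs]
  rw [this, abs_of_pos (by positivity)]
  rw [div_le_iff₀ hp]
  nlinarith [eta_ge hε y]

lemma eta_zero {ε : ℝ} (hε : 0 < ε) : eta ε 0 = ε := by
  simp [eta, Real.sqrt_sq hε.le]

lemma hasDerivAt_eta {ε : ℝ} (hε : 0 < ε) (y : ℝ) :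
    HasDerivAt (eta ε) (etad ε y) y := by
  have h1 : HasDerivAt (fun y : ℝ => y^2 + ε^2) (2*y) y := by
    simpa using ((hasDerivAt_pow 2 y).add_const (ε^2))
  have h2 : HasDerivAt Real.sqrt (1 / (2 * Real.sqrt (y^2+ε^2))) (y^2+ε^2) :=
    Real.hasDerivAt_sqrt (by positivity)
  have := h2.comp y h1
  refine this.congr_deriv ?_
  have hp : (0:ℝ) < Real.sqrt (y^2+ε^2) := Real.sqrt_pos.2 (by positivity)
  rw [etad, div_mul_eq_mul_div, one_mul, mul_div_mul_left _ _ (two_ne_zero)]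

lemma continuous_eta {ε : ℝ} : Continuous (eta ε) := by
  exact Real.continuous_sqrt.comp (by continuity)

lemma continuous_etad {ε : ℝ} (hε : 0 < ε) : Continuous (etad ε) := by
  apply Continuous.div (continuous_id) (Real.continuous_sqrt.comp (by continuity))
  intro y
  exact ne_of_gt (eta_pos hε y)

-- partial derivatives
def pdX (f : ℝ → ℝ → ℝ) (t x : ℝ) : ℝ := fderiv ℝ (fun q : ℝ × ℝ => f q.1 q.2) (t,x) (0,1)
def pdT (f : ℝ → ℝ → ℝ) (t x : ℝ) : ℝ := fderiv ℝ (fun q : ℝ × ℝ => f q.1 q.2) (t,x) (1,0)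

lemma hasDerivAt_pdX {f : ℝ → ℝ → ℝ} (hf : ContDiff ℝ 1 fun q : ℝ × ℝ => f q.1 q.2)
    (t x : ℝ) : HasDerivAt (f t) (pdX f t x) x := by
  have hline : HasDerivAt (fun x : ℝ => ((t, x) : ℝ × ℝ)) (0, 1) x :=
    (hasDerivAt_const x t).prodMk (hasDerivAt_id x)
  have hF := (hf.differentiable one_ne_zero (t,x)).hasFDerivAt
  exact hF.comp_hasDerivAt x hline

lemma hasDerivAt_pdT {f : ℝ → ℝ → ℝ} (hf : ContDiff ℝ 1 fun q : ℝ × ℝ => f q.1 q.2)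
    (t x : ℝ) : HasDerivAt (fun s => f s x) (pdT f t x) t := by
  have hline : HasDerivAt (fun s : ℝ => ((s, x) : ℝ × ℝ)) (1, 0) t :=
    (hasDerivAt_id t).prodMk (hasDerivAt_const t x)
  have hF := (hf.differentiable one_ne_zero (t,x)).hasFDerivAt
  exact hF.comp_hasDerivAt t hline

lemma continuous_pdX {f : ℝ → ℝ → ℝ} (hf : ContDiff ℝ 1 fun q : ℝ × ℝ => f q.1 q.2) :
    Continuous fun q : ℝ × ℝ => pdX f q.1 q.2 := by
  have h := hf.continuous_fderiv one_ne_zero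
  exact h.clm_apply continuous_const

lemma continuous_pdT {f : ℝ → ℝ → ℝ} (hf : ContDiff ℝ 1 fun q : ℝ × ℝ => f q.1 q.2) :
    Continuous fun q : ℝ × ℝ => pdT f q.1 q.2 := by
  have h := hf.continuous_fderiv one_ne_zero
  exact h.clm_apply continuous_const

end Stmt14Aux

/-- (Uniform `L¹` stability of the linearized Burgers equation.)
Let `u` be a bounded C¹ solution of the Burgers equation `∂ₜu + u ∂ₓu = 0` on `[0,T] × ℝ`
with bounded `∂ₓu`, and let `v` be a C¹, uniformly compactly supported solution of the
linearized Burgers equation `∂ₜv + ∂ₓ(uv) = 0`.  Then the `L¹` norm of `v` is conserved: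
`∫ |v(T,x)| dx = ∫ |v(0,x)| dx`.  (Hence `ρ_B(T) = 1` up to shock formation.) -/
theorem stmt14 (T : ℝ) (hT : 0 < T) (u : ℝ → ℝ → ℝ)
    (hu : ContDiff ℝ 1 fun q : ℝ × ℝ => u q.1 q.2)
    (hubdd : ∃ C : ℝ, ∀ t ∈ Icc 0 T, ∀ x : ℝ, |u t x| ≤ C ∧ |deriv (u t) x| ≤ C)
    (hburgers : ∀ t ∈ Icc 0 T, ∀ x : ℝ,
      deriv (fun s => u s x) t + u t x * deriv (u t) x = 0)
    (v : ℝ → ℝ → ℝ) (hv : ContDiff ℝ 1 fun q : ℝ × ℝ => v q.1 q.2)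
    (R : ℝ) (hR : 0 < R) (hsupp : ∀ t ∈ Icc 0 T, ∀ x : ℝ, R ≤ |x| → v t x = 0)
    (hlin : ∀ t ∈ Icc 0 T, ∀ x : ℝ,
      deriv (fun s => v s x) t + deriv (fun y => u t y * v t y) x = 0) :
    ∫ x : ℝ, |v T x| = ∫ x : ℝ, |v 0 x| := by
  classical
  obtain ⟨C, hC⟩ := hubdd
  have hC0 : 0 ≤ C := le_trans (abs_nonneg _) (hC 0 ⟨le_rfl, hT.le⟩ 0).1
  have hline : ∀ t : ℝ, Continuous fun x : ℝ => ((t, x) : ℝ × ℝ) :=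
    fun t => continuous_const.prodMk continuous_id
  have hvcont : Continuous fun q : ℝ × ℝ => v q.1 q.2 := hv.continuous
  have hvtc : ∀ t, Continuous (v t) := fun t => hvcont.comp (hline t)
  have hutc : ∀ t, Continuous (u t) := fun t => hu.continuous.comp (hline t)
  have hVt := Stmt14Aux.continuous_pdT hv
  have hVx := Stmt14Aux.continuous_pdX hv
  have hUx := Stmt14Aux.continuous_pdX hu
  have hRR : -R ≤ R := by linarith
  -- L¹ norm restricted to the support interval
  have habs : ∀ t ∈ Icc (0:ℝ) T, ∫ x : ℝ, |v t x| = ∫ x in (-R)..R, |v t x| := by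
    intro t ht
    rw [intervalIntegral.integral_of_le hRR]
    refine (setIntegral_eq_integral_of_forall_compl_eq_zero ?_).symm
    intro x hx
    have hx' : R ≤ |x| := by
      simp only [mem_Ioc, not_and_or, not_lt, not_le] at hx
      rcases hx with h | h
      · exact le_abs.2 (Or.inr (by linarith))
      · exact le_abs.2 (Or.inl h.le)
    rw [hsupp t ht x hx', abs_zero]
  -- key estimate for every ε > 0
  have key : ∀ ε > (0:ℝ), |(∫ x in (-R)..R, Stmt14Aux.eta ε (v T x)) -
      ∫ x in (-R)..R, Stmt14Aux.eta ε (v 0 x)| ≤ (2*C + 2*R*C) * ε * T := by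
    intro ε hε
    set F : ℝ → ℝ := fun t => ∫ x in (-R)..R, Stmt14Aux.eta ε (v t x) with hF
    set Fd : ℝ → ℝ := fun t => ∫ x in (-R)..R,
        Stmt14Aux.etad ε (v t x) * Stmt14Aux.pdT v t x with hFd
    have hint_eta : ∀ t : ℝ, IntervalIntegrable (fun x => Stmt14Aux.eta ε (v t x))
        volume (-R) R :=
      fun t => (Stmt14Aux.continuous_eta.comp (hvtc t)).intervalIntegrable _ _
    -- differentiation under the integral sign
    have hFder : ∀ t₀ : ℝ, HasDerivAt F (Fd t₀) t₀ := by
      intro t₀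
      obtain ⟨M, hM⟩ : ∃ M : ℝ, ∀ q ∈ (Icc (t₀-1) (t₀+1) ×ˢ Icc (-R) R : Set (ℝ × ℝ)),
          ‖Stmt14Aux.pdT v q.1 q.2‖ ≤ M :=
        (isCompact_Icc.prod isCompact_Icc).exists_bound_of_continuousOn hVt.continuousOn
      have main := intervalIntegral.hasDerivAt_integral_of_dominated_loc_of_deriv_le
        (F := fun t x => Stmt14Aux.eta ε (v t x))
        (F' := fun t x => Stmt14Aux.etad ε (v t x) * Stmt14Aux.pdT v t x)
        (x₀ := t₀) (a := -R) (b := R) (μ := volume) (bound := fun _ => M)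
        (Metric.ball_mem_nhds t₀ one_pos)
        (Filter.Eventually.of_forall fun t =>
          ((Stmt14Aux.continuous_eta.comp (hvtc t)).aestronglyMeasurable))
        (hint_eta t₀)
        (((Stmt14Aux.continuous_etad hε).comp (hvtc t₀) |>.mul
          (hVt.comp (hline t₀))).aestronglyMeasurable)
        (Filter.Eventually.of_forall ?_)
        intervalIntegrable_const
        (Filter.Eventually.of_forall ?_)
      · exact main.2
      · -- bound on the derivative
        intro x hx t htb
        have hxI : x ∈ Icc (-R) R := by
          rw [uIoc_of_le hRR] at hx
          exact ⟨hx.1.le, hx.2⟩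
        have htI : t ∈ Icc (t₀-1) (t₀+1) := by
          rw [Metric.mem_ball, Real.dist_eq, abs_lt] at htb
          constructor <;> linarith [htb.1, htb.2]
        have h1 : |Stmt14Aux.etad ε (v t x)| ≤ 1 := Stmt14Aux.abs_etad_le_one hε _
        have h2 : ‖Stmt14Aux.pdT v t x‖ ≤ M := hM (t, x) ⟨htI, hxI⟩
        rw [Real.norm_eq_abs, abs_mul]
        rw [Real.norm_eq_abs] at h2
        calc |Stmt14Aux.etad ε (v t x)| * |Stmt14Aux.pdT v t x|
            ≤ 1 * |Stmt14Aux.pdT v t x| :=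
              mul_le_mul_of_nonneg_right h1 (abs_nonneg _)
          _ = |Stmt14Aux.pdT v t x| := one_mul _
          _ ≤ M := h2
      · -- differentiability in t
        intro x _ t _
        have hd := (Stmt14Aux.hasDerivAt_eta hε (v t x)).comp t (Stmt14Aux.hasDerivAt_pdT hv t x)
        exact hd
    -- bound on Fd on [0, T]
    have hFd_bound : ∀ t ∈ Icc (0:ℝ) T, ‖Fd t‖ ≤ (2*C + 2*R*C) * ε := by
      intro t ht
      have hVt_eq : ∀ x : ℝ, Stmt14Aux.pdT v t x
          = -(Stmt14Aux.pdX u t x * v t x + u t x * Stmt14Aux.pdX v t x) := by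
        intro x
        have h1 : deriv (fun s => v s x) t = Stmt14Aux.pdT v t x :=
          (Stmt14Aux.hasDerivAt_pdT hv t x).deriv
        have h2 : deriv (fun y => u t y * v t y) x
            = Stmt14Aux.pdX u t x * v t x + u t x * Stmt14Aux.pdX v t x :=
          ((Stmt14Aux.hasDerivAt_pdX hu t x).mul (Stmt14Aux.hasDerivAt_pdX hv t x)).deriv
        have h3 := hlin t ht x
        rw [h1, h2] at h3
        linarith
      set g' : ℝ → ℝ := fun x => Stmt14Aux.pdX u t x * Stmt14Aux.eta ε (v t x)
          + u t x * (Stmt14Aux.etad ε (v t x) * Stmt14Aux.pdX v t x) with hg'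
      set h : ℝ → ℝ := fun x => Stmt14Aux.pdX u t x *
          (Stmt14Aux.eta ε (v t x) - v t x * Stmt14Aux.etad ε (v t x)) with hh
      have hUxc : Continuous fun x => Stmt14Aux.pdX u t x := hUx.comp (hline t)
      have hVxc : Continuous fun x => Stmt14Aux.pdX v t x := hVx.comp (hline t)
      have hg'c : Continuous g' := by
        apply Continuous.add
        · exact hUxc.mul (Stmt14Aux.continuous_eta.comp (hvtc t))
        · exact (hutc t).mul
            (((Stmt14Aux.continuous_etad hε).comp (hvtc t)).mul hVxc)
      have hhc : Continuous h := by
        apply hUxc.mul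
        exact (Stmt14Aux.continuous_eta.comp (hvtc t)).sub
          ((hvtc t).mul ((Stmt14Aux.continuous_etad hε).comp (hvtc t)))
      have hsplit : Fd t = (∫ x in (-R)..R, -(g' x)) + ∫ x in (-R)..R, h x := by
        rw [← intervalIntegral.integral_add (f := fun x => -(g' x)) (g := h)
          (hg'c.neg.intervalIntegrable (-R) R :
            IntervalIntegrable (fun x => -(g' x)) volume (-R) R)
          (hhc.intervalIntegrable _ _)]
        apply intervalIntegral.integral_congr
        intro x _
        simp only [hg', hh]
        rw [hVt_eq x]
        ring
      have hFTC : (∫ x in (-R)..R, g' x)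
          = u t R * Stmt14Aux.eta ε (v t R) - u t (-R) * Stmt14Aux.eta ε (v t (-R)) := by
        apply intervalIntegral.integral_eq_sub_of_hasDerivAt
        · intro x _
          exact (Stmt14Aux.hasDerivAt_pdX hu t x).mul
            ((Stmt14Aux.hasDerivAt_eta hε (v t x)).comp x (Stmt14Aux.hasDerivAt_pdX hv t x))
        · exact hg'c.intervalIntegrable _ _
      have hvR : v t R = 0 := hsupp t ht R (by rw [abs_of_pos hR])
      have hvmR : v t (-R) = 0 := hsupp t ht (-R) (by rw [abs_neg, abs_of_pos hR])
      have hFTC' : (∫ x in (-R)..R, g' x) = (u t R - u t (-R)) * ε := by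
        rw [hFTC, hvR, hvmR, Stmt14Aux.eta_zero hε]
        ring
      have hbd1 : |∫ x in (-R)..R, g' x| ≤ 2 * C * ε := by
        rw [hFTC', abs_mul, abs_of_pos hε]
        have h1 := (hC t ht R).1
        have h2 := (hC t ht (-R)).1
        have : |u t R - u t (-R)| ≤ 2 * C := by
          calc |u t R - u t (-R)| ≤ |u t R| + |u t (-R)| := abs_sub _ _
            _ ≤ 2 * C := by linarith
        nlinarith
      have hbd2 : |∫ x in (-R)..R, h x| ≤ C * ε * (2 * R) := by
        have := intervalIntegral.norm_integral_le_of_norm_le_const (C := C * ε)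
          (f := h) (a := -R) (b := R) ?_
        · rw [Real.norm_eq_abs] at this
          calc |∫ x in (-R)..R, h x| ≤ C * ε * |R - (-R)| := this
            _ = C * ε * (2 * R) := by rw [abs_of_pos (by linarith)]; ring
        · intro x _
          rw [Real.norm_eq_abs, hh, abs_mul]
          have h1 : |Stmt14Aux.pdX u t x| ≤ C := by
            have := (hC t ht x).2
            rwa [(Stmt14Aux.hasDerivAt_pdX hu t x).deriv] at this
          have h2 := Stmt14Aux.eta_sub_mul_le hε (v t x)
          exact mul_le_mul h1 h2 (abs_nonneg _) hC0
      rw [Real.norm_eq_abs, hsplit, intervalIntegral.integral_neg]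
      calc |-(∫ x in (-R)..R, g' x) + ∫ x in (-R)..R, h x|
          ≤ |∫ x in (-R)..R, g' x| + |∫ x in (-R)..R, h x| := by
            rw [← abs_neg (∫ x in (-R)..R, g' x)] at *
            exact abs_add_le _ _
        _ ≤ 2 * C * ε + C * ε * (2 * R) := add_le_add hbd1 hbd2
        _ = (2*C + 2*R*C) * ε := by ring
    -- mean value inequality
    have hmvt := (convex_Icc (0:ℝ) T).norm_image_sub_le_of_norm_hasDerivWithin_le
      (fun t ht => (hFder t).hasDerivWithinAt) hFd_bound
      (⟨le_rfl, hT.le⟩ : (0:ℝ) ∈ Icc (0:ℝ) T) (⟨hT.le, le_rfl⟩ : T ∈ Icc (0:ℝ) T)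
    rw [Real.norm_eq_abs, Real.norm_eq_abs, sub_zero, abs_of_pos hT] at hmvt
    exact hmvt
  -- closeness of regularized and true L¹ norms
  have hclose : ∀ t ∈ Icc (0:ℝ) T, ∀ ε > (0:ℝ),
      abs ((∫ x in (-R)..R, Stmt14Aux.eta ε (v t x)) - ∫ x : ℝ, |v t x|) ≤ ε * (2 * R) := by
    intro t ht ε hε
    rw [habs t ht]
    have hint1 : IntervalIntegrable (fun x => Stmt14Aux.eta ε (v t x)) volume (-R) R :=
      (Stmt14Aux.continuous_eta.comp (hvtc t)).intervalIntegrable _ _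
    have hint2 : IntervalIntegrable (fun x => |v t x|) volume (-R) R :=
      (hvtc t).abs.intervalIntegrable _ _
    rw [← intervalIntegral.integral_sub hint1 hint2]
    have := intervalIntegral.norm_integral_le_of_norm_le_const (C := ε)
      (f := fun x => Stmt14Aux.eta ε (v t x) - |v t x|) (a := -R) (b := R)
      (fun x _ => by rw [Real.norm_eq_abs]; exact Stmt14Aux.eta_sub_abs_le hε (v t x))
    rw [Real.norm_eq_abs] at this
    calc |∫ x in (-R)..R, (Stmt14Aux.eta ε (v t x) - |v t x|)| ≤ ε * |R - (-R)| := this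
      _ = ε * (2 * R) := by rw [abs_of_pos (by linarith : (0:ℝ) < R - (-R))]; ring
  -- assemble
  set A : ℝ := ∫ x : ℝ, |v T x| with hA
  set B : ℝ := ∫ x : ℝ, |v 0 x| with hB
  have main : ∀ ε > (0:ℝ), |A - B| ≤ ((2*C + 2*R*C) * T + 4 * R) * ε := by
    intro ε hε
    have h1 := hclose T ⟨hT.le, le_rfl⟩ ε hε
    have h2 := hclose 0 ⟨le_rfl, hT.le⟩ ε hε
    have h3 := key ε hε
    calc |A - B| = |-(((∫ x in (-R)..R, Stmt14Aux.eta ε (v T x)) - A))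
        + (((∫ x in (-R)..R, Stmt14Aux.eta ε (v T x)) - ∫ x in (-R)..R, Stmt14Aux.eta ε (v 0 x))
        + ((∫ x in (-R)..R, Stmt14Aux.eta ε (v 0 x)) - B))| := by ring_nf
      _ ≤ |(∫ x in (-R)..R, Stmt14Aux.eta ε (v T x)) - A|
          + (|(∫ x in (-R)..R, Stmt14Aux.eta ε (v T x)) - ∫ x in (-R)..R, Stmt14Aux.eta ε (v 0 x)|
          + |(∫ x in (-R)..R, Stmt14Aux.eta ε (v 0 x)) - B|) := by
            refine (abs_add_le _ _).trans ?_
            rw [abs_neg]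
            exact add_le_add le_rfl (abs_add_le _ _)
      _ ≤ ε * (2 * R) + ((2*C + 2*R*C) * ε * T + ε * (2 * R)) := by
            exact add_le_add h1 (add_le_add h3 h2)
      _ = ((2*C + 2*R*C) * T + 4 * R) * ε := by ring
  have hM : (0:ℝ) < (2*C + 2*R*C) * T + 4 * R := by
    nlinarith [mul_nonneg hC0 hT.le, mul_nonneg (mul_nonneg hR.le hC0) hT.le]
  have hzero : |A - B| ≤ 0 := by
    by_contra hcon
    push_neg at hcon
    have hε : 0 < |A - B| / (2 * ((2*C + 2*R*C) * T + 4 * R)) := by positivity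
    have hle := main _ hε
    have h2 : ((2*C + 2*R*C) * T + 4 * R) * (|A - B| / (2 * ((2*C + 2*R*C) * T + 4 * R)))
        = |A - B| / 2 := by
      field_simp
    rw [h2] at hle
    linarith
  have : A - B = 0 := by
    have := abs_nonneg (A - B)
    have h0 : |A - B| = 0 := le_antisymm hzero this
    exact abs_eq_zero.mp h0
  linarith
end
end

section
/- Let ε>0, let S : ℝ³ → ℝ be C², let φ : ℝ³ → ℝ and b : ℝ³ → ℝ³ be C¹. Set ξ := ∇S and assume ξ(x) ≠ 0 and ⟨ξ(x), b(x)⟩ = 0 for every x ∈ ℝ³. Define the ℂ³-valued vector field A(x) := ε φ(x) e^{iS(x)/ε} (ξ(x) × b(x)) / |ξ(x)|². Then for every x ∈ ℝ³, curl A(x) = −i φ(x) b(x) e^{iS(x)/ε} + ε e^{iS(x)/ε} · curl( φ (ξ×b)/|ξ|² )(x). In particular, the leading-order term of curl A as ε → 0 is the divergence-free WKB velocity profile ∓ i φ b e^{iS/ε}, with remainder of size O(ε). -/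
noncomputable section

open MeasureTheory Set
open scoped RealInnerProductSpace ENNReal

/-- The partial derivative `∂ⱼ Wᵢ (x)` of a `ℂ³`-valued field on `ℝ³` (componentwise on
real and imaginary parts, i.e. the real Fréchet derivative of the `ℂ`-valued component). -/
def pdC3 (W : E3 → Fin 3 → ℂ) (j i : Fin 3) (x : E3) : ℂ :=
  fderiv ℝ (fun y => W y i) x (e3 j)

/-- The curl of a `ℂ³`-valued field on `ℝ³`, componentwise. -/
def curlC3 (W : E3 → Fin 3 → ℂ) (x : E3) : Fin 3 → ℂ :=
  ![pdC3 W 1 2 x - pdC3 W 2 1 x, pdC3 W 2 0 x - pdC3 W 0 2 x, pdC3 W 0 1 x - pdC3 W 1 0 x]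

/-- (Key identity of the WKB construction.)  Let `ε > 0`, `S` C²,
`φ`, `b` C¹, `ξ := ∇S` with `ξ(x) ≠ 0` and `⟨ξ(x), b(x)⟩ = 0` everywhere, and set
`A := ε φ e^{iS/ε} (ξ × b)/|ξ|²`.  Then
`curl A = −i φ b e^{iS/ε} + ε e^{iS/ε} curl(φ (ξ×b)/|ξ|²)`: the leading-order term of
`curl A` as `ε → 0` is the divergence-free WKB velocity profile, with `O(ε)` remainder. -/
theorem stmt17 (ε : ℝ) (hε : 0 < ε) (S : E3 → ℝ) (hS : ContDiff ℝ 2 S)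
    (φ : E3 → ℝ) (hφ : ContDiff ℝ 1 φ) (b : E3 → E3) (hb : ContDiff ℝ 1 b)
    (hξ : ∀ x : E3, gradient S x ≠ 0)
    (horth : ∀ x : E3, ⟪gradient S x, b x⟫ = 0) :
    ∀ (x : E3) (i : Fin 3),
      curlC3 (fun y j => (ε : ℂ) * Complex.exp (Complex.I * (S y : ℂ) / (ε : ℂ)) *
          ((((φ y / ‖gradient S y‖ ^ 2) • cross3 (gradient S y) (b y)) j : ℝ) : ℂ)) x i
        = -Complex.I * (φ x : ℂ) * Complex.exp (Complex.I * (S x : ℂ) / (ε : ℂ))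
            * ((b x i : ℝ) : ℂ)
          + (ε : ℂ) * Complex.exp (Complex.I * (S x : ℂ) / (ε : ℂ)) *
            ((curl3 (fun y => (φ y / ‖gradient S y‖ ^ 2) •
                cross3 (gradient S y) (b y)) x i : ℝ) : ℂ) := by
  intro x i
  set W : E3 → E3 := fun y => (φ y / ‖gradient S y‖ ^ 2) • cross3 (gradient S y) (b y)
    with hWdef
  -- norm squared
  have hQ : ∀ y : E3, ‖gradient S y‖ ^ 2 =
      (gradient S y 0) ^ 2 + (gradient S y 1) ^ 2 + (gradient S y 2) ^ 2 := by
    intro y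
    rw [EuclideanSpace.norm_eq, Real.sq_sqrt (by positivity)]
    simp [Fin.sum_univ_three, Real.norm_eq_abs, sq_abs]
  have hQne : ∀ y : E3, ‖gradient S y‖ ^ 2 ≠ 0 := fun y =>
    pow_ne_zero 2 (norm_ne_zero_iff.mpr (hξ y))
  -- smoothness of the gradient
  have hgrad : ContDiff ℝ 1 fun y => gradient S y := by
    have h1 : ContDiff ℝ 1 (fderiv ℝ S) := hS.fderiv_right (by norm_num)
    exact (InnerProductSpace.toDual ℝ E3).symm.contDiff.comp h1
  have hgk : ∀ k : Fin 3, ContDiff ℝ 1 fun y => gradient S y k :=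
    contDiff_euclidean.mp hgrad
  have hbk : ∀ k : Fin 3, ContDiff ℝ 1 fun y => b y k := contDiff_euclidean.mp hb
  have hQCD : ContDiff ℝ 1 fun y => ‖gradient S y‖ ^ 2 := by
    have : (fun y => ‖gradient S y‖ ^ 2) = fun y =>
        (gradient S y 0) ^ 2 + (gradient S y 1) ^ 2 + (gradient S y 2) ^ 2 := funext hQ
    rw [this]
    exact (((hgk 0).pow 2).add ((hgk 1).pow 2)).add ((hgk 2).pow 2)
  -- components of W
  have hW0 : ∀ y : E3, W y 0 = φ y / ‖gradient S y‖ ^ 2 *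
      (gradient S y 1 * b y 2 - gradient S y 2 * b y 1) := by
    intro y; simp [hWdef, cross3, smul_eq_mul]
  have hW1 : ∀ y : E3, W y 1 = φ y / ‖gradient S y‖ ^ 2 *
      (gradient S y 2 * b y 0 - gradient S y 0 * b y 2) := by
    intro y; simp [hWdef, cross3, smul_eq_mul]
  have hW2 : ∀ y : E3, W y 2 = φ y / ‖gradient S y‖ ^ 2 *
      (gradient S y 0 * b y 1 - gradient S y 1 * b y 0) := by
    intro y; simp [hWdef, cross3, smul_eq_mul]
  have hcd0 : ContDiff ℝ 1 fun y => W y 0 := by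
    rw [show (fun y => W y 0) = fun y => φ y / ‖gradient S y‖ ^ 2 *
        (gradient S y 1 * b y 2 - gradient S y 2 * b y 1) from funext hW0]
    exact (hφ.div hQCD hQne).mul (((hgk 1).mul (hbk 2)).sub ((hgk 2).mul (hbk 1)))
  have hcd1 : ContDiff ℝ 1 fun y => W y 1 := by
    rw [show (fun y => W y 1) = fun y => φ y / ‖gradient S y‖ ^ 2 *
        (gradient S y 2 * b y 0 - gradient S y 0 * b y 2) from funext hW1]
    exact (hφ.div hQCD hQne).mul (((hgk 2).mul (hbk 0)).sub ((hgk 0).mul (hbk 2)))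
  have hcd2 : ContDiff ℝ 1 fun y => W y 2 := by
    rw [show (fun y => W y 2) = fun y => φ y / ‖gradient S y‖ ^ 2 *
        (gradient S y 0 * b y 1 - gradient S y 1 * b y 0) from funext hW2]
    exact (hφ.div hQCD hQne).mul (((hgk 0).mul (hbk 1)).sub ((hgk 1).mul (hbk 0)))
  have hWkCD : ∀ k : Fin 3, ContDiff ℝ 1 fun y => W y k := by
    intro k
    fin_cases k
    · exact hcd0
    · exact hcd1
    · exact hcd2
  have hWdiff : DifferentiableAt ℝ W x :=
    differentiableAt_euclidean.mpr fun k => ((hWkCD k).differentiable one_ne_zero).differentiableAt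
  -- componentwise derivatives of W agree with pd3
  have hpd : ∀ j k : Fin 3, fderiv ℝ (fun y => W y k) x (e3 j) = pd3 W j k x := by
    intro j k
    have hcomp : HasFDerivAt (fun y => W y k)
        ((EuclideanSpace.proj k : E3 →L[ℝ] ℝ).comp (fderiv ℝ W x)) x :=
      (EuclideanSpace.proj k : E3 →L[ℝ] ℝ).hasFDerivAt.comp x hWdiff.hasFDerivAt
    rw [hcomp.fderiv]
    rfl
  -- derivative of S
  have hSd : DifferentiableAt ℝ S x :=
    (hS.differentiable (by norm_num)).differentiableAt
  have hdSj : ∀ j : Fin 3, fderiv ℝ S x (e3 j) = gradient S x j := by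
    intro j
    have h1 : ⟪gradient S x, e3 j⟫ = fderiv ℝ S x (e3 j) :=
      InnerProductSpace.toDual_symm_apply
    rw [← h1]
    simp [-inner_gradient_left, e3, PiLp.inner_apply, EuclideanSpace.single_apply, Fin.sum_univ_three]
  -- derivative of the oscillatory exponential
  have hSc : HasFDerivAt (fun y => ((S y : ℝ) : ℂ))
      (Complex.ofRealCLM.comp (fderiv ℝ S x)) x :=
    Complex.ofRealCLM.hasFDerivAt.comp x hSd.hasFDerivAt
  have hmulrw : ∀ z : ℂ, Complex.I * z / (ε : ℂ) = Complex.I / (ε : ℂ) * z := fun z => by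
    ring
  have hEexp : HasFDerivAt (fun y => Complex.exp (Complex.I * (S y : ℂ) / (ε : ℂ)))
      (Complex.exp (Complex.I * (S x : ℂ) / (ε : ℂ)) •
        ((Complex.I / (ε : ℂ)) • (Complex.ofRealCLM.comp (fderiv ℝ S x)))) x := by
    have h1 : HasFDerivAt (fun y => Complex.I / (ε : ℂ) * ((S y : ℝ) : ℂ))
        ((Complex.I / (ε : ℂ)) • (Complex.ofRealCLM.comp (fderiv ℝ S x))) x :=
      hSc.const_mul _
    have h2 := h1.cexp
    simpa only [hmulrw] using h2
  have hεne : (ε : ℂ) ≠ 0 := by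
    exact_mod_cast ne_of_gt hε
  -- the key componentwise identity for the curl of the oscillatory field
  have hkey : ∀ j k : Fin 3,
      pdC3 (fun y j => (ε : ℂ) * Complex.exp (Complex.I * (S y : ℂ) / (ε : ℂ)) *
          ((W y j : ℝ) : ℂ)) j k x
        = Complex.exp (Complex.I * (S x : ℂ) / (ε : ℂ)) *
            (Complex.I * (gradient S x j : ℂ) * ((W x k : ℝ) : ℂ)
              + (ε : ℂ) * ((pd3 W j k x : ℝ) : ℂ)) := by
    intro j k
    have hWc : HasFDerivAt (fun y => ((W y k : ℝ) : ℂ))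
        (Complex.ofRealCLM.comp (fderiv ℝ (fun y => W y k) x)) x :=
      Complex.ofRealCLM.hasFDerivAt.comp x
        (((hWkCD k).differentiable one_ne_zero).differentiableAt).hasFDerivAt
    have hF := (hEexp.const_mul (ε : ℂ)).mul hWc
    rw [pdC3, show fderiv ℝ (fun y => (ε : ℂ) * Complex.exp (Complex.I * (S y : ℂ) / (ε : ℂ)) *
        ((W y k : ℝ) : ℂ)) x = _ from hF.fderiv]
    simp only [ContinuousLinearMap.add_apply, ContinuousLinearMap.smul_apply,
      ContinuousLinearMap.coe_comp', Function.comp_apply, Complex.ofRealCLM_apply,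
      smul_eq_mul, hpd j k, hdSj j]
    field_simp
    ring
  -- orthogonality and norm, componentwise
  have horth' : gradient S x 0 * b x 0 + gradient S x 1 * b x 1
      + gradient S x 2 * b x 2 = 0 := by
    have := horth x
    simpa [-inner_gradient_left, PiLp.inner_apply, Fin.sum_univ_three, mul_comm] using this
  -- the vector identity ξ × (ξ × b) = -‖ξ‖² b
  have hid0 : gradient S x 1 * W x 2 - gradient S x 2 * W x 1 = -(φ x * b x 0) := by
    rw [hW1 x, hW2 x, hQ x]
    field_simp [hQ x ▸ hQne x]
    linear_combination φ x * gradient S x 0 * horth'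
  have hid1 : gradient S x 2 * W x 0 - gradient S x 0 * W x 2 = -(φ x * b x 1) := by
    rw [hW0 x, hW2 x, hQ x]
    field_simp [hQ x ▸ hQne x]
    linear_combination φ x * gradient S x 1 * horth'
  have hid2 : gradient S x 0 * W x 1 - gradient S x 1 * W x 0 = -(φ x * b x 2) := by
    rw [hW0 x, hW1 x, hQ x]
    field_simp [hQ x ▸ hQne x]
    linear_combination φ x * gradient S x 2 * horth'
  -- finish componentwise
  have hid0' : ((gradient S x 1 : ℝ) : ℂ) * ((W x 2 : ℝ) : ℂ)
      - ((gradient S x 2 : ℝ) : ℂ) * ((W x 1 : ℝ) : ℂ)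
      = -(((φ x : ℝ) : ℂ) * ((b x 0 : ℝ) : ℂ)) := by exact_mod_cast congrArg Complex.ofReal hid0
  have hid1' : ((gradient S x 2 : ℝ) : ℂ) * ((W x 0 : ℝ) : ℂ)
      - ((gradient S x 0 : ℝ) : ℂ) * ((W x 2 : ℝ) : ℂ)
      = -(((φ x : ℝ) : ℂ) * ((b x 1 : ℝ) : ℂ)) := by exact_mod_cast congrArg Complex.ofReal hid1
  have hid2' : ((gradient S x 0 : ℝ) : ℂ) * ((W x 1 : ℝ) : ℂ)
      - ((gradient S x 1 : ℝ) : ℂ) * ((W x 0 : ℝ) : ℂ)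
      = -(((φ x : ℝ) : ℂ) * ((b x 2 : ℝ) : ℂ)) := by exact_mod_cast congrArg Complex.ofReal hid2
  fin_cases i
  · show curlC3 _ x 0 = _
    rw [show curlC3 (fun y j => (ε : ℂ) * Complex.exp (Complex.I * (S y : ℂ) / (ε : ℂ)) *
        ((W y j : ℝ) : ℂ)) x 0 = pdC3 _ 1 2 x - pdC3 _ 2 1 x from rfl,
      hkey 1 2, hkey 2 1]
    show _ = -Complex.I * ((φ x : ℝ) : ℂ) * Complex.exp (Complex.I * (S x : ℂ) / (ε : ℂ)) *
        ((b x 0 : ℝ) : ℂ) + (ε : ℂ) * Complex.exp (Complex.I * (S x : ℂ) / (ε : ℂ)) *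
        (((pd3 W 1 2 x - pd3 W 2 1 x : ℝ)) : ℂ)
    push_cast
    linear_combination Complex.exp (Complex.I * (S x : ℂ) / (ε : ℂ)) * Complex.I * hid0'
  · show curlC3 _ x 1 = _
    rw [show curlC3 (fun y j => (ε : ℂ) * Complex.exp (Complex.I * (S y : ℂ) / (ε : ℂ)) *
        ((W y j : ℝ) : ℂ)) x 1 = pdC3 _ 2 0 x - pdC3 _ 0 2 x from rfl,
      hkey 2 0, hkey 0 2]
    show _ = -Complex.I * ((φ x : ℝ) : ℂ) * Complex.exp (Complex.I * (S x : ℂ) / (ε : ℂ)) *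
        ((b x 1 : ℝ) : ℂ) + (ε : ℂ) * Complex.exp (Complex.I * (S x : ℂ) / (ε : ℂ)) *
        (((pd3 W 2 0 x - pd3 W 0 2 x : ℝ)) : ℂ)
    push_cast
    linear_combination Complex.exp (Complex.I * (S x : ℂ) / (ε : ℂ)) * Complex.I * hid1'
  · show curlC3 _ x 2 = _
    rw [show curlC3 (fun y j => (ε : ℂ) * Complex.exp (Complex.I * (S y : ℂ) / (ε : ℂ)) *
        ((W y j : ℝ) : ℂ)) x 2 = pdC3 _ 0 1 x - pdC3 _ 1 0 x from rfl,
      hkey 0 1, hkey 1 0]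
    show _ = -Complex.I * ((φ x : ℝ) : ℂ) * Complex.exp (Complex.I * (S x : ℂ) / (ε : ℂ)) *
        ((b x 2 : ℝ) : ℂ) + (ε : ℂ) * Complex.exp (Complex.I * (S x : ℂ) / (ε : ℂ)) *
        (((pd3 W 0 1 x - pd3 W 1 0 x : ℝ)) : ℂ)
    push_cast
    linear_combination Complex.exp (Complex.I * (S x : ℂ) / (ε : ℂ)) * Complex.I * hid2'
end
end
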